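/- arXiv:1204.5551 — 8 statements merged into one kernel-verified Lean document; each statement's English description precedes it below -/
import Mathlib

section
/- For a positive real random variable V with CDF F, the supremum over prices p > 0 of p·P(V > p) is at least (1/e)·exp(E[log V]). -/
open MeasureTheory Real Set
open scoped ENNReal NNReal

lemma ofReal_max_zero' (a : ℝ) : ENNReal.ofReal (max a 0) = ENNReal.ofReal a := by
  rcases le_total a 0 with h | h
  · rw [max_eq_right h, ENNReal.ofReal_zero, eq_comm, ENNReal.ofReal_eq_zero]
    exact h
  · rw [max_eq_left h]

/-- Pointwise layer-cake bound: for `0 < v`,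
`log v - log u ≤ ∫_{u}^{∞} 1_{t < v} / t dt`. -/
lemma log_le_lintegral_aux {u v : ℝ} (hu : 0 < u) (hv : 0 < v) :
    ENNReal.ofReal (Real.log v - Real.log u) ≤
      ∫⁻ t : ℝ, (if u < t ∧ t < v then ENNReal.ofReal t⁻¹ else 0) := by
  rcases le_or_gt v u with hvu | huv
  · have : Real.log v - Real.log u ≤ 0 := by
      have := Real.log_le_log hv hvu
      linarith
    rw [ENNReal.ofReal_eq_zero.2 this]
    exact zero_le
  · have heq : (fun t : ℝ => (if u < t ∧ t < v then ENNReal.ofReal t⁻¹ else 0)) =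
        (Set.Ioo u v).indicator (fun t => ENNReal.ofReal t⁻¹) := by
      funext t
      by_cases h : u < t ∧ t < v
      · rw [if_pos h, Set.indicator_of_mem (Set.mem_Ioo.2 h)]
      · rw [if_neg h, Set.indicator_of_notMem (fun hc => h (Set.mem_Ioo.1 hc))]
    rw [heq, lintegral_indicator measurableSet_Ioo _]
    have hInt : IntegrableOn (fun t : ℝ => t⁻¹) (Set.Ioo u v) := by
      have hc : ContinuousOn (fun t : ℝ => t⁻¹) (Set.Icc u v) := by
        apply ContinuousOn.inv₀ continuousOn_id
        intro x hx
        exact ne_of_gt (lt_of_lt_of_le hu hx.1)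
      exact (hc.integrableOn_Icc).mono_set Set.Ioo_subset_Icc_self
    have hnn : 0 ≤ᵐ[volume.restrict (Set.Ioo u v)] fun t : ℝ => t⁻¹ := by
      filter_upwards [ae_restrict_mem measurableSet_Ioo] with t ht
      exact le_of_lt (inv_pos.2 (lt_trans hu ht.1))
    rw [← ofReal_integral_eq_lintegral_ofReal hInt hnn]
    have hval : ∫ t in Set.Ioo u v, (t : ℝ)⁻¹ = Real.log v - Real.log u := by
      rw [← integral_Ioc_eq_integral_Ioo, ← intervalIntegral.integral_of_le huv.le,
        integral_inv, Real.log_div hv.ne' hu.ne']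
      rw [Set.uIcc_of_le huv.le]
      intro h0
      exact absurd h0.1 (not_le.2 hu)
    rw [hval]

/-- The optimal seller revenue `sup_{p>0} p·P(V > p)` is at least
`(1/e)·exp(E[log V])`, the geometric expectation of `V` divided by `e`. -/
theorem stmt_0 {Ω : Type*} [MeasurableSpace Ω] (μ : Measure Ω) [IsProbabilityMeasure μ]
    (V : Ω → ℝ) (hV : Measurable V) (hpos : ∀ᵐ ω ∂μ, 0 < V ω)
    (hint : Integrable (fun ω => Real.log (V ω)) μ) :
    ENNReal.ofReal ((1 / Real.exp 1) * Real.exp (∫ ω, Real.log (V ω) ∂μ)) ≤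
      ⨆ p : ℝ, ⨆ _ : 0 < p, ENNReal.ofReal p * μ {ω | p < V ω} := by
  set S := ⨆ p : ℝ, ⨆ _ : 0 < p, ENNReal.ofReal p * μ {ω | p < V ω} with hSdef
  have hle : ∀ p : ℝ, 0 < p → ENNReal.ofReal p * μ {ω | p < V ω} ≤ S := by
    intro p hp
    exact le_iSup_of_le p (le_iSup (fun _ : 0 < p => ENNReal.ofReal p * μ {ω | p < V ω}) hp)
  by_cases htop : S = ⊤
  · rw [htop]; exact le_top
  -- S is positive
  have hSpos : 0 < S := by
    by_contra h
    push_neg at h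
    have h0 : S = 0 := le_antisymm h (zero_le)
    have hz : ∀ n : ℕ, μ {ω | (1 : ℝ) / (n + 1) < V ω} = 0 := by
      intro n
      have hp : (0 : ℝ) < 1 / (n + 1) := by positivity
      have h1 := hle _ hp
      rw [h0, le_zero_iff, mul_eq_zero] at h1
      rcases h1 with h' | h'
      · rw [ENNReal.ofReal_eq_zero] at h'
        exact absurd h' (not_le.2 hp)
      · exact h'
    have hsub : {ω | 0 < V ω} ⊆ ⋃ n : ℕ, {ω | (1 : ℝ) / (n + 1) < V ω} := by
      intro ω hω
      obtain ⟨n, hn⟩ := exists_nat_one_div_lt (K := ℝ) (ε := V ω) hω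
      exact Set.mem_iUnion.2 ⟨n, hn⟩
    have h1 : μ {ω | 0 < V ω} = 0 :=
      measure_mono_null hsub (measure_iUnion_null hz)
    have hc : μ {ω | 0 < V ω}ᶜ = 0 := by
      rw [Set.compl_setOf]
      exact ae_iff.1 hpos
    have h2 := measure_add_measure_compl (μ := μ)
      (measurableSet_lt measurable_const hV : MeasurableSet {ω | 0 < V ω})
    rw [h1, hc, measure_univ, zero_add] at h2
    exact zero_ne_one h2
  set u := S.toReal with hudef
  have hu : 0 < u := ENNReal.toReal_pos (ne_of_gt hSpos) htop
  have hSu : S = ENNReal.ofReal u := (ENNReal.ofReal_toReal htop).symm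
  -- the price bound in terms of u
  have hmu : ∀ t : ℝ, 0 < t → μ {ω | t < V ω} ≤ ENNReal.ofReal (u / t) := by
    intro t ht
    have h1 : ENNReal.ofReal t * μ {ω | t < V ω} ≤ ENNReal.ofReal u := by
      rw [← hSu]; exact hle t ht
    rw [ENNReal.ofReal_div_of_pos ht]
    rw [ENNReal.le_div_iff_mul_le (Or.inl (by simp [ht])) (Or.inl ENNReal.ofReal_ne_top)]
    rwa [mul_comm]
  -- the kernel
  set f : Ω → ℝ → ℝ≥0∞ := fun ω t => if u < t ∧ t < V ω then ENNReal.ofReal t⁻¹ else 0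
    with hfdef
  have hfmeas : Measurable (Function.uncurry f) := by
    have hA : MeasurableSet {p : Ω × ℝ | u < p.2 ∧ p.2 < V p.1} := by
      have h1 : MeasurableSet {p : Ω × ℝ | u < p.2} := measurable_snd measurableSet_Ioi
      have h2 : MeasurableSet {p : Ω × ℝ | p.2 < V p.1} :=
        measurableSet_lt measurable_snd (hV.comp measurable_fst)
      exact h1.inter h2
    exact Measurable.ite hA (measurable_snd.inv.ennreal_ofReal) measurable_const
  -- Step 1 : E[log V] - log u  ≤ ∫⁻ ω ∫⁻ t f
  have step1 : ENNReal.ofReal ((∫ ω, Real.log (V ω) ∂μ) - Real.log u) ≤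
      ∫⁻ ω, ∫⁻ t, f ω t ∂volume ∂μ := by
    set g : Ω → ℝ := fun ω => Real.log (V ω) - Real.log u with hgdef
    have hg : Integrable g μ := hint.sub (integrable_const _)
    have hgmax : Integrable (fun ω => max (g ω) 0) μ := hg.pos_part
    have hEg : ∫ ω, g ω ∂μ = (∫ ω, Real.log (V ω) ∂μ) - Real.log u := by
      rw [integral_sub hint (integrable_const _), integral_const]
      simp
    calc ENNReal.ofReal ((∫ ω, Real.log (V ω) ∂μ) - Real.log u)
        = ENNReal.ofReal (∫ ω, g ω ∂μ) := by rw [hEg]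
      _ ≤ ENNReal.ofReal (∫ ω, max (g ω) 0 ∂μ) := by
          apply ENNReal.ofReal_le_ofReal
          exact integral_mono hg hgmax (fun ω => le_max_left _ _)
      _ = ∫⁻ ω, ENNReal.ofReal (max (g ω) 0) ∂μ := by
          exact ofReal_integral_eq_lintegral_ofReal hgmax
            (Filter.Eventually.of_forall fun ω => le_max_right _ _)
      _ = ∫⁻ ω, ENNReal.ofReal (g ω) ∂μ := by
          simp_rw [ofReal_max_zero']
      _ ≤ ∫⁻ ω, ∫⁻ t, f ω t ∂volume ∂μ := by
          apply lintegral_mono_ae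
          filter_upwards [hpos] with ω hω
          exact log_le_lintegral_aux hu hω
  -- Step 2 : swap the order of integration (Tonelli)
  have step2 : ∫⁻ ω, ∫⁻ t, f ω t ∂volume ∂μ = ∫⁻ t, ∫⁻ ω, f ω t ∂μ ∂volume :=
    lintegral_lintegral_swap hfmeas.aemeasurable
  -- Step 3 : compute / bound the inner integral in ω
  have step3 : ∀ t : ℝ, ∫⁻ ω, f ω t ∂μ ≤
      (Set.Ioi u).indicator (fun t => ENNReal.ofReal (u * t ^ (-2 : ℝ))) t := by
    intro t
    by_cases ht : u < t
    · have ht0 : 0 < t := lt_trans hu ht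
      have hset : MeasurableSet {ω | t < V ω} := measurableSet_lt measurable_const hV
      have h1 : ∫⁻ ω, f ω t ∂μ =
          ∫⁻ ω, ({ω | t < V ω}).indicator (fun _ => ENNReal.ofReal t⁻¹) ω ∂μ := by
        refine lintegral_congr fun ω => ?_
        simp only [hfdef, Set.indicator_apply, Set.mem_setOf_eq]
        by_cases h : t < V ω <;> simp [h, ht]
      rw [h1, lintegral_indicator hset, setLIntegral_const,
        Set.indicator_of_mem (show t ∈ Set.Ioi u from ht)]
      calc ENNReal.ofReal t⁻¹ * μ {ω | t < V ω}
          ≤ ENNReal.ofReal t⁻¹ * ENNReal.ofReal (u / t) :=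
            mul_le_mul_right (hmu t ht0) _
        _ = ENNReal.ofReal (t⁻¹ * (u / t)) := by
            rw [← ENNReal.ofReal_mul (le_of_lt (inv_pos.2 ht0))]
        _ = ENNReal.ofReal (u * t ^ (-2 : ℝ)) := by
            congr 1
            rw [show (-2 : ℝ) = -(2 : ℕ) by norm_num, Real.rpow_neg ht0.le,
              Real.rpow_natCast, pow_two, mul_inv, div_eq_mul_inv]
            ring
    · rw [Set.indicator_of_notMem (show t ∉ Set.Ioi u from ht)]
      have heq : (fun ω => f ω t) = fun _ => (0 : ℝ≥0∞) := by
        funext ω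
        rw [hfdef]
        simp only [not_and]
        rw [if_neg]
        intro h
        exact absurd h.1 ht
      rw [heq, lintegral_const, zero_mul]
  -- Step 4 : the t-integral of the bound equals 1
  have step4 : ∫⁻ t, (Set.Ioi u).indicator (fun t => ENNReal.ofReal (u * t ^ (-2 : ℝ))) t
      ∂volume = ENNReal.ofReal 1 := by
    rw [lintegral_indicator measurableSet_Ioi _]
    have hInt : IntegrableOn (fun t : ℝ => u * t ^ (-2 : ℝ)) (Set.Ioi u) :=
      (integrableOn_Ioi_rpow_of_lt (by norm_num) hu).const_mul u
    have hnn : 0 ≤ᵐ[volume.restrict (Set.Ioi u)] fun t : ℝ => u * t ^ (-2 : ℝ) := by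
      filter_upwards [ae_restrict_mem measurableSet_Ioi] with t ht
      exact mul_nonneg hu.le (Real.rpow_nonneg (le_of_lt (lt_trans hu ht)) _)
    rw [← ofReal_integral_eq_lintegral_ofReal hInt hnn]
    congr 1
    rw [MeasureTheory.integral_const_mul, integral_Ioi_rpow_of_lt (by norm_num) hu]
    rw [show (-2 : ℝ) + 1 = -1 by norm_num, Real.rpow_neg_one]
    field_simp
  -- Combine: E[log V] - log u ≤ 1
  have key : (∫ ω, Real.log (V ω) ∂μ) - Real.log u ≤ 1 := by
    have h := step1.trans_eq step2
    have h2 : ENNReal.ofReal ((∫ ω, Real.log (V ω) ∂μ) - Real.log u) ≤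
        ENNReal.ofReal 1 := by
      refine h.trans ?_
      rw [← step4]
      exact lintegral_mono step3
    exact (ENNReal.ofReal_le_ofReal_iff zero_le_one).1 h2
  -- Conclude
  rw [hSu]
  apply ENNReal.ofReal_le_ofReal
  have : (1 / Real.exp 1) * Real.exp (∫ ω, Real.log (V ω) ∂μ) =
      Real.exp ((∫ ω, Real.log (V ω) ∂μ) - 1) := by
    rw [Real.exp_sub]
    ring
  rw [this, ← Real.exp_log hu]
  apply Real.exp_le_exp.2
  linarith
end

section
/- If V has the equal revenue distribution with parameter c > 0, then u(V) := sup_{p>0} p·P(V > p) = c, and hence u(V) = (1/e)·exp(E[log V]); i.e., the lower bound u(V) ≥ (1/e)·G[V] is achieved with equality. -/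
open MeasureTheory

open Set

/-- If `V` has the equal revenue distribution with parameter `c > 0`, then
`u(V) = sup_{p>0} p·P(V > p) = c`, and hence `u(V) = (1/e)·exp(E[log V])`:
the lower bound `u(V) ≥ (1/e)·G[V]` is achieved with equality. -/
theorem stmt_3 {Ω : Type*} [MeasurableSpace Ω] (μ : Measure Ω) [IsProbabilityMeasure μ]
    (V : Ω → ℝ) (hV : Measurable V) (c : ℝ) (hc : 0 < c)
    (hF1 : ∀ p ≤ c, (μ {ω | V ω ≤ p}).toReal = 0)
    (hF2 : ∀ p > c, (μ {ω | V ω ≤ p}).toReal = 1 - c / p) :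
    (⨆ p : ℝ, ⨆ _ : 0 < p, ENNReal.ofReal p * μ {ω | p < V ω}) = ENNReal.ofReal c ∧
    (⨆ p : ℝ, ⨆ _ : 0 < p, ENNReal.ofReal p * μ {ω | p < V ω}) =
      ENNReal.ofReal ((1 / Real.exp 1) * Real.exp (∫ ω, Real.log (V ω) ∂μ)) := by
  have hne : ∀ p : ℝ, μ {ω | V ω ≤ p} ≠ ⊤ := fun p => (measure_ne_top μ _)
  have hcomp : ∀ p : ℝ, μ {ω | p < V ω} = 1 - μ {ω | V ω ≤ p} := by
    intro p
    have : {ω | p < V ω} = {ω | V ω ≤ p}ᶜ := by ext ω; simp [not_le]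
    rw [this, measure_compl (show MeasurableSet {ω | V ω ≤ p} from hV measurableSet_Iic) (hne p),
      measure_univ]
  have h0 : ∀ p ≤ c, μ {ω | V ω ≤ p} = 0 := by
    intro p hp
    have := hF1 p hp
    exact (ENNReal.toReal_eq_zero_iff _).mp this |>.resolve_right (hne p)
  have h1 : ∀ p ≤ c, μ {ω | p < V ω} = 1 := by
    intro p hp; rw [hcomp, h0 p hp, tsub_zero]
  have h2 : ∀ p > c, μ {ω | p < V ω} = ENNReal.ofReal (c / p) := by
    intro p hp
    have hp0 : 0 < p := hc.trans hp
    have hcp : c / p ≤ 1 := by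
      rw [div_le_one hp0]; exact hp.le
    have hcp0 : 0 ≤ c / p := by positivity
    have hμ : μ {ω | V ω ≤ p} = ENNReal.ofReal (1 - c / p) := by
      rw [← hF2 p hp, ENNReal.ofReal_toReal (hne p)]
    rw [hcomp, hμ]
    rw [← ENNReal.ofReal_one]
    rw [ENNReal.ofReal_sub _ hcp0]
    rw [ENNReal.sub_sub_cancel (by simp) (ENNReal.ofReal_le_ofReal hcp)]
  -- the supremum equals ofReal c
  have hsup : (⨆ p : ℝ, ⨆ _ : 0 < p, ENNReal.ofReal p * μ {ω | p < V ω}) = ENNReal.ofReal c := by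
    apply le_antisymm
    · refine iSup₂_le fun p hp => ?_
      rcases le_or_gt p c with h | h
      · rw [h1 p h, mul_one]; exact ENNReal.ofReal_le_ofReal h
      · rw [h2 p h, ← ENNReal.ofReal_mul (hc.trans h).le,
          mul_div_cancel₀ c (hc.trans h).ne']
    · have := le_iSup₂ (f := fun (p : ℝ) (_ : 0 < p) => ENNReal.ofReal p * μ {ω | p < V ω}) c hc
      rwa [h1 c le_rfl, mul_one] at this
  -- a.e. V > c
  have haeV : ∀ᵐ ω ∂μ, c < V ω := by
    have : μ {ω | V ω ≤ c} = 0 := h0 c le_rfl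
    filter_upwards [measure_eq_zero_iff_ae_notMem.mp this] with ω hω
    simpa [not_le] using hω
  -- f = log V - log c
  set f : Ω → ℝ := fun ω => Real.log (V ω) - Real.log c with hf
  have hf_nn : 0 ≤ᵐ[μ] f := by
    filter_upwards [haeV] with ω hω
    simp only [hf, Pi.zero_apply, sub_nonneg]
    exact Real.log_le_log hc hω.le
  have hf_meas : AEMeasurable f μ := ((Real.measurable_log.comp hV).sub measurable_const).aemeasurable
  -- μ {t < f} = ofReal (exp (-t)) for t > 0
  have hmeas_lt : ∀ t > (0:ℝ), μ {ω | t < f ω} = ENNReal.ofReal (Real.exp (-t)) := by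
    intro t ht
    have hset : μ {ω | t < f ω} = μ {ω | c * Real.exp t < V ω} := by
      apply measure_congr
      filter_upwards [haeV] with ω hω
      have hv0 : 0 < V ω := hc.trans hω
      simp only [eq_iff_iff, Set.mem_setOf_eq, hf]
      constructor
      · intro h
        replace h : t < Real.log (V ω) - Real.log c := h
        have : Real.log c + t < Real.log (V ω) := by linarith
        calc c * Real.exp t = Real.exp (Real.log c + t) := by
              rw [Real.exp_add, Real.exp_log hc]
          _ < V ω := by
              rw [← Real.exp_log hv0]; exact Real.exp_lt_exp.mpr this
      · intro h
        replace h : c * Real.exp t < V ω := h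
        have := Real.log_lt_log (by positivity) h
        rw [Real.log_mul hc.ne' (Real.exp_pos t).ne', Real.log_exp] at this
        show t < Real.log (V ω) - Real.log c
        linarith
    rw [hset, h2 _ (lt_mul_of_one_lt_right hc (Real.one_lt_exp_iff.mpr ht))]
    congr 1
    rw [Real.exp_neg]
    field_simp
  -- lintegral of f
  have hlint : ∫⁻ ω, ENNReal.ofReal (f ω) ∂μ = 1 := by
    rw [lintegral_eq_lintegral_meas_lt μ hf_nn hf_meas]
    have : ∀ᵐ t ∂(volume.restrict (Ioi (0:ℝ))), μ {a | t < f a} = ENNReal.ofReal (Real.exp (-t)) := by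
      filter_upwards [ae_restrict_mem measurableSet_Ioi] with t ht
      exact hmeas_lt t ht
    rw [lintegral_congr_ae this]
    rw [← ofReal_integral_eq_lintegral_ofReal
      (by have h := exp_neg_integrableOn_Ioi 0 one_pos; simp at h; exact h)
      (Filter.Eventually.of_forall fun t => (Real.exp_pos _).le)]
    rw [integral_exp_neg_Ioi_zero, ENNReal.ofReal_one]
  -- integrability of f
  have hf_int : Integrable f μ := by
    refine ⟨hf_meas.aestronglyMeasurable, ?_⟩
    rw [hasFiniteIntegral_iff_norm]
    have : ∫⁻ ω, ENNReal.ofReal ‖f ω‖ ∂μ = ∫⁻ ω, ENNReal.ofReal (f ω) ∂μ := by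
      apply lintegral_congr_ae
      filter_upwards [hf_nn] with ω hω
      rw [Real.norm_of_nonneg hω]
    rw [this, hlint]; exact ENNReal.one_lt_top
  have hint_f : ∫ ω, f ω ∂μ = 1 := by
    rw [integral_eq_lintegral_of_nonneg_ae hf_nn hf_meas.aestronglyMeasurable, hlint]
    simp
  -- integral of log V
  have hlogV : ∫ ω, Real.log (V ω) ∂μ = 1 + Real.log c := by
    have : (fun ω => Real.log (V ω)) = fun ω => f ω + Real.log c := by
      funext ω; simp [hf]
    rw [this, integral_add hf_int (integrable_const _), hint_f, integral_const]
    simp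
  refine ⟨hsup, ?_⟩
  rw [hsup, hlogV, Real.exp_add, Real.exp_log hc]
  rw [one_div, ← mul_assoc, inv_mul_cancel₀ (Real.exp_pos 1).ne', one_mul]
end

section
/- Let V be a positive random variable with continuous CDF F. If the expected seller revenue equals (1/e)·exp(E[log V]) (with E[log V] finite), then V has the equal revenue distribution Φ_c with c = u(V). -/
open MeasureTheory Set ENNReal

lemma real_int_Ico_one_div {a b : ℝ} (ha : 0 < a) (hab : a ≤ b) :
    ∫ t in Set.Ico a b, 1/t = Real.log (b/a) := by
  rw [MeasureTheory.integral_Ico_eq_integral_Ioo, ← MeasureTheory.integral_Ioc_eq_integral_Ioo,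
    ← intervalIntegral.integral_of_le hab]
  apply integral_one_div
  rw [Set.uIcc_of_le hab]; intro h; exact absurd h.1 (by linarith)

lemma cont_on_one_div {a b : ℝ} (ha : 0 < a) : ContinuousOn (fun t : ℝ => 1/t) (Set.Icc a b) := by
  apply ContinuousOn.div continuousOn_const continuousOn_id
  intro x hx; exact ne_of_gt (lt_of_lt_of_le ha hx.1)

lemma intOn_Ico_one_div {a b : ℝ} (ha : 0 < a) :
    IntegrableOn (fun t : ℝ => 1/t) (Set.Ico a b) :=
  ((cont_on_one_div ha).integrableOn_Icc).mono_set Set.Ico_subset_Icc_self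

lemma lint_Ico_one_div {a b : ℝ} (ha : 0 < a) (hab : a ≤ b) :
    ∫⁻ t in Set.Ico a b, ENNReal.ofReal (1/t) = ENNReal.ofReal (Real.log (b/a)) := by
  rw [← real_int_Ico_one_div ha hab]
  rw [← ofReal_integral_eq_lintegral_ofReal (intOn_Ico_one_div ha)]
  filter_upwards [ae_restrict_mem measurableSet_Ico] with t ht
  have : 0 < t := lt_of_lt_of_le ha ht.1; positivity

lemma int_Ioi_c_div_sq {m c : ℝ} (hm : 0 < m) (hc : 0 ≤ c) :
    IntegrableOn (fun t : ℝ => c/t^2) (Set.Ioi m) ∧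
      ∫ t in Set.Ioi m, c/t^2 = c/m := by
  have hderiv : ∀ x ∈ Set.Ici m, HasDerivAt (fun t : ℝ => -(c * t⁻¹)) (c/x^2) x := by
    intro x hx
    have hx0 : x ≠ 0 := ne_of_gt (lt_of_lt_of_le hm hx)
    have := (((hasDerivAt_inv hx0).const_mul c).neg)
    refine this.congr_deriv ?_
    ring
  have hpos : ∀ x ∈ Set.Ioi m, 0 ≤ c/x^2 := fun x hx => by positivity
  have htend : Filter.Tendsto (fun t : ℝ => -(c * t⁻¹)) Filter.atTop (nhds 0) := by
    have := ((tendsto_inv_atTop_zero (𝕜 := ℝ)).const_mul c).neg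
    simpa using this
  constructor
  · exact integrableOn_Ioi_deriv_of_nonneg' hderiv hpos htend
  · rw [integral_Ioi_of_hasDerivAt_of_nonneg' hderiv hpos htend]
    field_simp [ne_of_gt hm]
    ring

lemma lint_Ici_c_div_sq {m c : ℝ} (hm : 0 < m) (hc : 0 ≤ c) :
    ∫⁻ t in Set.Ici m, ENNReal.ofReal (c/t^2) = ENNReal.ofReal (c/m) := by
  obtain ⟨hi, hv⟩ := int_Ioi_c_div_sq hm hc
  rw [← MeasureTheory.restrict_Ioi_eq_restrict_Ici, ← hv,
    ← ofReal_integral_eq_lintegral_ofReal hi]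
  filter_upwards [ae_restrict_mem measurableSet_Ioi] with t ht
  have : 0 < t := lt_trans hm ht
  positivity

-- ∫ t in Ico c 1, (1/t - c/t^2) = c - 1 - log c
lemma real_int_Ico_phi {c : ℝ} (hc : 0 < c) (hc1 : c ≤ 1) :
    ∫ t in Set.Ico c 1, (1/t - c/t^2) = c - 1 - Real.log c := by
  rw [MeasureTheory.integral_Ico_eq_integral_Ioo, ← MeasureTheory.integral_Ioc_eq_integral_Ioo,
    ← intervalIntegral.integral_of_le hc1]
  have hderiv : ∀ x ∈ Set.uIcc c 1, HasDerivAt (fun t : ℝ => Real.log t + c * t⁻¹) (1/x - c/x^2) x := by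
    intro x hx
    rw [Set.uIcc_of_le hc1] at hx
    have hx0 : x ≠ 0 := ne_of_gt (lt_of_lt_of_le hc hx.1)
    have := (Real.hasDerivAt_log hx0).add ((hasDerivAt_inv hx0).const_mul c)
    refine this.congr_deriv ?_
    ring
  have hint : IntervalIntegrable (fun x => 1/x - c/x^2) volume c 1 := by
    apply ContinuousOn.intervalIntegrable
    apply ContinuousOn.sub
    · apply ContinuousOn.div continuousOn_const continuousOn_id
      intro x hx; rw [Set.uIcc_of_le hc1] at hx; exact ne_of_gt (lt_of_lt_of_le hc hx.1)
    · apply ContinuousOn.div continuousOn_const (by fun_prop)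
      intro x hx; rw [Set.uIcc_of_le hc1] at hx
      have : 0 < x := lt_of_lt_of_le hc hx.1
      positivity
  rw [intervalIntegral.integral_eq_sub_of_hasDerivAt hderiv hint]
  simp
  field_simp [ne_of_gt hc]
  ring


lemma repr_pos (ν : Measure ℝ) [IsProbabilityMeasure ν] (hsupp : ∀ᵐ v ∂ν, 0 < v) :
    ∫⁻ v, ENNReal.ofReal (Real.log v) ∂ν
      = ∫⁻ t in Set.Ici 1, ENNReal.ofReal (1/t) * ν (Set.Ioi t) := by
  have hSmeas : MeasurableSet {p : ℝ × ℝ | 1 ≤ p.2 ∧ p.2 < p.1} :=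
    (measurableSet_le measurable_const measurable_snd).inter
      (measurableSet_lt measurable_snd measurable_fst)
  set f : ℝ → ℝ → ℝ≥0∞ := fun v t =>
    {p : ℝ × ℝ | 1 ≤ p.2 ∧ p.2 < p.1}.indicator (fun p => ENNReal.ofReal (1/p.2)) (v, t) with hf
  have hfm : AEMeasurable (Function.uncurry f) (ν.prod volume) := by
    apply Measurable.aemeasurable
    exact (Measurable.indicator (by fun_prop) hSmeas)
  have step1 : ∀ v : ℝ, 0 < v → ENNReal.ofReal (Real.log v) = ∫⁻ t, f v t := by
    intro v hv0
    have h1 : ∫⁻ t, f v t = ∫⁻ t in Set.Ico 1 v, ENNReal.ofReal (1/t) := by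
      rw [← lintegral_indicator measurableSet_Ico]
      apply lintegral_congr
      intro t
      simp only [hf, Set.indicator_apply, Set.mem_setOf_eq, Set.mem_Ico]
    rw [h1]
    rcases le_or_gt v 1 with hv | hv
    · rw [Set.Ico_eq_empty (not_lt.2 hv), Measure.restrict_empty, lintegral_zero_measure]
      rw [ENNReal.ofReal_eq_zero]
      exact Real.log_nonpos hv0.le hv
    · rw [lint_Ico_one_div one_pos hv.le, div_one]
  calc ∫⁻ v, ENNReal.ofReal (Real.log v) ∂ν = ∫⁻ v, ∫⁻ t, f v t ∂volume ∂ν := by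
        apply lintegral_congr_ae
        filter_upwards [hsupp] with v hv using step1 v hv
    _ = ∫⁻ t, ∫⁻ v, f v t ∂ν ∂volume := lintegral_lintegral_swap hfm
    _ = ∫⁻ t in Set.Ici 1, ENNReal.ofReal (1/t) * ν (Set.Ioi t) := by
        rw [← lintegral_indicator measurableSet_Ici]
        apply lintegral_congr
        intro t
        by_cases ht : 1 ≤ t
        · have h2 : ∀ v, f v t = (Set.Ioi t).indicator (fun _ => ENNReal.ofReal (1/t)) v := by
            intro v
            simp only [hf, Set.indicator_apply, Set.mem_setOf_eq, Set.mem_Ioi, ht, true_and]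
          rw [lintegral_congr h2, lintegral_indicator measurableSet_Ioi]
          simp [Set.indicator_of_mem (Set.mem_Ici.2 ht)]
        · have h2 : ∀ v, f v t = 0 := fun v =>
            Set.indicator_of_notMem (fun hmem => ht hmem.1) _
          simp [lintegral_congr h2, Set.indicator_of_notMem (fun h => ht (Set.mem_Ici.1 h))]

lemma repr_neg (ν : Measure ℝ) [IsProbabilityMeasure ν] (hsupp : ∀ᵐ v ∂ν, 0 < v) :
    ∫⁻ v, ENNReal.ofReal (-Real.log v) ∂ν
      = ∫⁻ t in Set.Ioo 0 1, ENNReal.ofReal (1/t) * ν (Set.Iic t) := by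
  have hnull : ∀ t : ℝ, t ≤ 0 → ν (Set.Iic t) = 0 := by
    intro t ht
    have : ν {v : ℝ | ¬ 0 < v} = 0 := by
      rw [← ENNReal.bot_eq_zero, ← le_bot_iff]
      exact le_of_eq (by simpa [ae_iff] using hsupp)
    apply measure_mono_null _ this
    intro v hv
    simp only [Set.mem_Iic] at hv
    simp only [Set.mem_setOf_eq, not_lt]
    linarith
  have hSmeas : MeasurableSet {p : ℝ × ℝ | p.1 ≤ p.2 ∧ p.2 < 1} :=
    (measurableSet_le measurable_fst measurable_snd).inter
      (measurableSet_lt measurable_snd measurable_const)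
  set f : ℝ → ℝ → ℝ≥0∞ := fun v t =>
    {p : ℝ × ℝ | p.1 ≤ p.2 ∧ p.2 < 1}.indicator (fun p => ENNReal.ofReal (1/p.2)) (v, t) with hf
  have hfm : AEMeasurable (Function.uncurry f) (ν.prod volume) := by
    apply Measurable.aemeasurable
    exact (Measurable.indicator (by fun_prop) hSmeas)
  have step1 : ∀ v : ℝ, 0 < v → ENNReal.ofReal (-Real.log v) = ∫⁻ t, f v t := by
    intro v hv0
    have h1 : ∫⁻ t, f v t = ∫⁻ t in Set.Ico v 1, ENNReal.ofReal (1/t) := by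
      rw [← lintegral_indicator measurableSet_Ico]
      apply lintegral_congr
      intro t
      simp only [hf, Set.indicator_apply, Set.mem_setOf_eq, Set.mem_Ico]
    rw [h1]
    rcases le_or_gt 1 v with hv | hv
    · rw [Set.Ico_eq_empty (not_lt.2 hv), Measure.restrict_empty, lintegral_zero_measure]
      rw [ENNReal.ofReal_eq_zero, neg_nonpos]
      exact Real.log_nonneg hv
    · rw [lint_Ico_one_div hv0 hv.le, Real.log_div one_ne_zero (ne_of_gt hv0), Real.log_one,
        zero_sub]
  calc ∫⁻ v, ENNReal.ofReal (-Real.log v) ∂ν = ∫⁻ v, ∫⁻ t, f v t ∂volume ∂ν := by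
        apply lintegral_congr_ae
        filter_upwards [hsupp] with v hv using step1 v hv
    _ = ∫⁻ t, ∫⁻ v, f v t ∂ν ∂volume := lintegral_lintegral_swap hfm
    _ = ∫⁻ t in Set.Iio 1, ENNReal.ofReal (1/t) * ν (Set.Iic t) := by
        rw [← lintegral_indicator measurableSet_Iio]
        apply lintegral_congr
        intro t
        by_cases ht : t < 1
        · have h2 : ∀ v, f v t = (Set.Iic t).indicator (fun _ => ENNReal.ofReal (1/t)) v := by
            intro v
            simp only [hf, Set.indicator_apply, Set.mem_setOf_eq, Set.mem_Iic, ht, and_true]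
          rw [lintegral_congr h2, lintegral_indicator measurableSet_Iic]
          simp [Set.indicator_of_mem (Set.mem_Iio.2 ht)]
        · have h2 : ∀ v, f v t = 0 := fun v =>
            Set.indicator_of_notMem (fun hmem => ht hmem.2) _
          simp [lintegral_congr h2, Set.indicator_of_notMem (fun h => ht (Set.mem_Iio.1 h))]
    _ = ∫⁻ t in Set.Ioo 0 1, ENNReal.ofReal (1/t) * ν (Set.Iic t) := by
        have hsplit : Set.Iio (1:ℝ) = Set.Iic 0 ∪ Set.Ioo 0 1 := by
          ext x; simp only [Set.mem_Iio, Set.mem_union, Set.mem_Iic, Set.mem_Ioo]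
          constructor
          · intro h; rcases le_or_gt x 0 with h0 | h0
            · exact Or.inl h0
            · exact Or.inr ⟨h0, h⟩
          · rintro (h | h) <;> [linarith; exact h.2]
        rw [hsplit, lintegral_union measurableSet_Ioo
          ((Set.Iic_disjoint_Ioi le_rfl).mono_right Set.Ioo_subset_Ioi_self)]
        have : ∫⁻ t in Set.Iic 0, ENNReal.ofReal (1/t) * ν (Set.Iic t) = 0 := by
          rw [← lintegral_zero (μ := volume.restrict (Set.Iic (0:ℝ)))]
          apply lintegral_congr_ae
          filter_upwards [ae_restrict_mem measurableSet_Iic] with t ht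
          rw [hnull t ht, mul_zero]
        rw [this, zero_add]


noncomputable def Dfun (c : ℝ) : ℝ → ℝ≥0∞ := fun t => min 1 (ENNReal.ofReal (c/t))

lemma Dfun_eq_one {c t : ℝ} (ht : 0 < t) (h : t ≤ c) : Dfun c t = 1 := by
  rw [Dfun, min_eq_left]
  rw [ENNReal.one_le_ofReal, le_div_iff₀ ht]; linarith

lemma Dfun_eq_ofReal {c t : ℝ} (ht : 0 < t) (h : c ≤ t) :
    Dfun c t = ENNReal.ofReal (c/t) := by
  rw [Dfun, min_eq_right]
  rw [ENNReal.ofReal_le_one, div_le_one ht]; exact h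

lemma Pstar_eval {c : ℝ} (hc : 0 < c) :
    ∫⁻ t in Set.Ici 1, ENNReal.ofReal (1/t) * Dfun c t
      = ENNReal.ofReal (Real.log (max 1 c)) + ENNReal.ofReal (c / max 1 c) := by
  set m := max 1 c with hm
  have hm1 : (1:ℝ) ≤ m := le_max_left _ _
  have hmc : c ≤ m := le_max_right _ _
  have hm0 : (0:ℝ) < m := lt_of_lt_of_le one_pos hm1
  rw [← Set.Ico_union_Ici_eq_Ici hm1,
    lintegral_union measurableSet_Ici ((Set.Iio_disjoint_Ici le_rfl).mono_left Set.Ico_subset_Iio_self)]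
  congr 1
  · -- over Ico 1 m : D = 1
    have : ∀ᵐ t ∂(volume.restrict (Set.Ico (1:ℝ) m)),
        ENNReal.ofReal (1/t) * Dfun c t = ENNReal.ofReal (1/t) := by
      filter_upwards [ae_restrict_mem measurableSet_Ico] with t ht
      have ht0 : (0:ℝ) < t := lt_of_lt_of_le one_pos ht.1
      have htc : t ≤ c := by
        rcases le_or_gt c 1 with h | h
        · have hme : m = 1 := max_eq_left h
          exfalso; rw [hme] at ht; exact absurd ht.1 (not_le.2 ht.2)
        · have hme : m = c := max_eq_right h.le
          rw [hme] at ht; exact ht.2.le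
      rw [Dfun_eq_one ht0 htc, mul_one]
    rw [lintegral_congr_ae this, lint_Ico_one_div one_pos hm1, div_one]
  · -- over Ici m : D = ofReal (c/t)
    have : ∀ᵐ t ∂(volume.restrict (Set.Ici m)),
        ENNReal.ofReal (1/t) * Dfun c t = ENNReal.ofReal (c/t^2) := by
      filter_upwards [ae_restrict_mem measurableSet_Ici] with t ht
      have ht0 : (0:ℝ) < t := lt_of_lt_of_le hm0 ht
      rw [Dfun_eq_ofReal ht0 (le_trans hmc ht), ← ENNReal.ofReal_mul (by positivity)]
      congr 1
      rw [div_mul_div_comm, one_mul, sq]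
    rw [lintegral_congr_ae this, lint_Ici_c_div_sq hm0 hc.le]

lemma Nstar_eval {c : ℝ} (hc : 0 < c) :
    ∫⁻ t in Set.Ioo 0 1, ENNReal.ofReal (1/t) * (1 - Dfun c t)
      = ENNReal.ofReal (Real.log (max 1 c) - Real.log c + c / max 1 c - 1) := by
  rcases le_or_gt 1 c with h1c | h1c
  · -- c ≥ 1 : zero
    have hmax : max 1 c = c := max_eq_right h1c
    rw [hmax]
    have hz : ∀ᵐ t ∂(volume.restrict (Set.Ioo (0:ℝ) 1)),
        ENNReal.ofReal (1/t) * (1 - Dfun c t) = 0 := by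
      filter_upwards [ae_restrict_mem measurableSet_Ioo] with t ht
      rw [Dfun_eq_one ht.1 (le_trans ht.2.le h1c), tsub_self, mul_zero]
    rw [lintegral_congr_ae hz, lintegral_zero]
    rw [div_self (ne_of_gt hc)]
    simp
  · -- c < 1
    have hmax : max 1 c = 1 := max_eq_left h1c.le
    rw [hmax]
    rw [← Set.Ioo_union_Ico_eq_Ioo hc h1c.le,
      lintegral_union measurableSet_Ico (by
        apply Set.disjoint_left.2
        rintro x ⟨_, hx2⟩ ⟨hx3, _⟩
        exact absurd hx3 (not_le.2 hx2))]
    have hz : ∀ᵐ t ∂(volume.restrict (Set.Ioo (0:ℝ) c)),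
        ENNReal.ofReal (1/t) * (1 - Dfun c t) = 0 := by
      filter_upwards [ae_restrict_mem measurableSet_Ioo] with t ht
      rw [Dfun_eq_one ht.1 ht.2.le, tsub_self, mul_zero]
    rw [lintegral_congr_ae hz, lintegral_zero, zero_add]
    have hcong : ∀ᵐ t ∂(volume.restrict (Set.Ico c 1)),
        ENNReal.ofReal (1/t) * (1 - Dfun c t) = ENNReal.ofReal (1/t - c/t^2) := by
      filter_upwards [ae_restrict_mem measurableSet_Ico] with t ht
      have ht0 : (0:ℝ) < t := lt_of_lt_of_le hc ht.1
      rw [Dfun_eq_ofReal ht0 ht.1, ← ENNReal.ofReal_one, ← ENNReal.ofReal_sub _ (by positivity),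
        ← ENNReal.ofReal_mul (by positivity)]
      congr 1
      field_simp
    rw [lintegral_congr_ae hcong]
    have hInt : IntegrableOn (fun t : ℝ => 1/t - c/t^2) (Set.Ico c 1) := by
      apply ContinuousOn.integrableOn_Icc (a := c) (b := 1) ?_ |>.mono_set Set.Ico_subset_Icc_self
      apply ContinuousOn.sub (cont_on_one_div hc)
      apply ContinuousOn.div continuousOn_const (by fun_prop)
      intro x hx
      have : 0 < x := lt_of_lt_of_le hc hx.1
      positivity
    rw [← ofReal_integral_eq_lintegral_ofReal hInt (by
      filter_upwards [ae_restrict_mem measurableSet_Ico] with t ht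
      have ht0 : (0:ℝ) < t := lt_of_lt_of_le hc ht.1
      have h2 : c ≤ t := ht.1
      simp only [Pi.zero_apply]
      rw [sub_nonneg, div_le_div_iff₀ (by positivity) ht0]
      nlinarith)]
    rw [real_int_Ico_phi hc h1c.le]
    congr 1
    rw [Real.log_one]
    ring

section helpers

lemma Dfun_toReal {c t : ℝ} (hc : 0 ≤ c) (ht : 0 < t) :
    (Dfun c t).toReal = min 1 (c/t) := by
  rcases le_total t c with h | h
  · rw [Dfun_eq_one ht h, min_eq_left (by rw [le_div_iff₀ ht]; linarith)]
    simp
  · rw [Dfun_eq_ofReal ht h, min_eq_right (by rw [div_le_one ht]; exact h),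
      ENNReal.toReal_ofReal (by positivity)]

lemma Dfun_le_one {c t : ℝ} : Dfun c t ≤ 1 := min_le_left _ _

-- equality extraction
lemma ae_eq_of_lint_eq {α : Type*} [MeasurableSpace α] {μ : Measure α} {f g : α → ℝ≥0∞}
    (hfm : Measurable f) (hgm : Measurable g) (hfin : ∫⁻ a, f a ∂μ ≠ ⊤)
    (hle : f ≤ᵐ[μ] g) (hint : ∫⁻ a, f a ∂μ = ∫⁻ a, g a ∂μ) : f =ᵐ[μ] g := by
  have hsub : ∫⁻ a, (g - f) a ∂μ = ∫⁻ a, g a ∂μ - ∫⁻ a, f a ∂μ :=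
    lintegral_sub hfm hfin hle
  rw [← hint, tsub_self] at hsub
  have hz : (g - f) =ᵐ[μ] 0 := (lintegral_eq_zero_iff (hgm.sub hfm)).1 hsub
  filter_upwards [hz, hle] with a ha hb
  have : g a - f a = 0 := ha
  exact le_antisymm hb (tsub_eq_zero_iff_le.1 this)

end helpers

/-- If `V` is a positive random variable with continuous CDF and the optimal seller
revenue equals `(1/e)·exp(E[log V])`, then `V` has the equal revenue distribution
`Φ_c` with `c = u(V)`. -/
theorem stmt_4 {Ω : Type*} [MeasurableSpace Ω] (μ : Measure Ω) [IsProbabilityMeasure μ]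
    (V : Ω → ℝ) (hV : Measurable V) (hpos : ∀ᵐ ω ∂μ, 0 < V ω)
    (F : ℝ → ℝ) (hF : ∀ p, F p = (μ {ω | V ω ≤ p}).toReal) (hcont : Continuous F)
    (hint : Integrable (fun ω => Real.log (V ω)) μ)
    (heq : (⨆ p : ℝ, ⨆ _ : 0 < p, ENNReal.ofReal p * μ {ω | p < V ω}) =
      ENNReal.ofReal ((1 / Real.exp 1) * Real.exp (∫ ω, Real.log (V ω) ∂μ))) :
    ∀ p : ℝ,
      F p = if p ≤ ((⨆ p : ℝ, ⨆ _ : 0 < p, ENNReal.ofReal p * μ {ω | p < V ω})).toReal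
        then 0
        else 1 - ((⨆ p : ℝ, ⨆ _ : 0 < p, ENNReal.ofReal p * μ {ω | p < V ω})).toReal / p := by
  classical
  set I : ℝ := ∫ ω, Real.log (V ω) ∂μ with hIdef
  set r : ℝ := (1 / Real.exp 1) * Real.exp I with hrdef
  have hr : 0 < r := by positivity
  set S : ℝ≥0∞ := ⨆ p : ℝ, ⨆ _ : 0 < p, ENNReal.ofReal p * μ {ω | p < V ω} with hSdef
  set c : ℝ := S.toReal with hcdef
  have hcr : c = r := by rw [hcdef, heq, ENNReal.toReal_ofReal hr.le]
  have hc : 0 < c := hcr ▸ hr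
  have hSc : S = ENNReal.ofReal c := by rw [hcr, heq]
  -- I = 1 + log c
  have hI : I = 1 + Real.log c := by
    have h1 : Real.log c = Real.log (1 / Real.exp 1) + Real.log (Real.exp I) := by
      rw [hcr, hrdef]
      exact Real.log_mul (by positivity) (by positivity)
    rw [Real.log_exp, one_div, Real.log_inv, Real.log_exp] at h1
    linarith
  -- pushforward measure
  set ν : Measure ℝ := μ.map V with hνdef
  have : IsProbabilityMeasure ν := Measure.isProbabilityMeasure_map hV.aemeasurable
  have hν_Iic : ∀ p : ℝ, ν (Set.Iic p) = μ {ω | V ω ≤ p} := by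
    intro p; rw [hνdef, Measure.map_apply hV measurableSet_Iic]; rfl
  have hν_Ioi : ∀ p : ℝ, ν (Set.Ioi p) = μ {ω | p < V ω} := by
    intro p; rw [hνdef, Measure.map_apply hV measurableSet_Ioi]; rfl
  have hν_pos : ∀ᵐ v ∂ν, 0 < v := by
    rw [hνdef, MeasureTheory.ae_map_iff hV.aemeasurable (measurableSet_Ioi (a := (0:ℝ)))]
    exact hpos
  -- complement
  have hcompl : ∀ t : ℝ, ν (Set.Iic t) = 1 - ν (Set.Ioi t) := by
    intro t
    have : Set.Iic t = (Set.Ioi t)ᶜ := by simp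
    rw [this, measure_compl measurableSet_Ioi (measure_ne_top ν _), measure_univ]
  -- tail bound
  have htail : ∀ t : ℝ, 0 < t → ν (Set.Ioi t) ≤ ENNReal.ofReal (c/t) := by
    intro t ht
    have h1 : ENNReal.ofReal t * μ {ω | t < V ω} ≤ S := le_iSup₂ (f := fun p (_ : 0 < p) =>
      ENNReal.ofReal p * μ {ω | p < V ω}) t ht
    rw [hSc] at h1
    rw [ENNReal.ofReal_div_of_pos ht]
    rw [ENNReal.le_div_iff_mul_le (Or.inl (by simpa using ht)) (Or.inl ENNReal.ofReal_ne_top)]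
    rw [mul_comm, hν_Ioi]
    exact h1
  have htailD : ∀ t : ℝ, 0 < t → ν (Set.Ioi t) ≤ Dfun c t := by
    intro t ht
    exact le_min prob_le_one (htail t ht)
  -- the lintegral quantities
  set P : ℝ≥0∞ := ∫⁻ t in Set.Ici 1, ENNReal.ofReal (1/t) * ν (Set.Ioi t) with hPdef
  set N : ℝ≥0∞ := ∫⁻ t in Set.Ioo 0 1, ENNReal.ofReal (1/t) * ν (Set.Iic t) with hNdef
  have hP : ∫⁻ ω, ENNReal.ofReal (Real.log (V ω)) ∂μ = P := by
    rw [hPdef, ← repr_pos ν hν_pos, hνdef, lintegral_map Real.measurable_log.ennreal_ofReal hV]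
  have hN : ∫⁻ ω, ENNReal.ofReal (-Real.log (V ω)) ∂μ = N := by
    rw [hNdef, ← repr_neg ν hν_pos, hνdef, lintegral_map (f := fun v : ℝ => ENNReal.ofReal (-Real.log v)) Real.measurable_log.neg.ennreal_ofReal hV]
  have hPfin : P ≠ ⊤ := by
    rw [← hP]
    have hb := hint.hasFiniteIntegral
    rw [HasFiniteIntegral] at hb
    refine ne_of_lt (lt_of_le_of_lt (lintegral_mono fun ω => ?_) hb)
    exact Real.ofReal_le_enorm _
  have hNfin : N ≠ ⊤ := by
    rw [← hN]
    have hb := hint.neg.hasFiniteIntegral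
    rw [HasFiniteIntegral] at hb
    refine ne_of_lt (lt_of_le_of_lt (lintegral_mono fun ω => ?_) hb)
    exact Real.ofReal_le_enorm _
  have hmain : P.toReal - N.toReal = 1 + Real.log c := by
    rw [← hI, hIdef]
    rw [integral_eq_lintegral_pos_part_sub_lintegral_neg_part hint, hP, hN]
  -- candidate quantities
  set m : ℝ := max 1 c with hmdef
  have hm1 : (1:ℝ) ≤ m := le_max_left _ _
  have hmc : c ≤ m := le_max_right _ _
  have hm0 : (0:ℝ) < m := lt_of_lt_of_le one_pos hm1
  set Ps : ℝ≥0∞ := ∫⁻ t in Set.Ici 1, ENNReal.ofReal (1/t) * Dfun c t with hPsdef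
  set Ns : ℝ≥0∞ := ∫⁻ t in Set.Ioo 0 1, ENNReal.ofReal (1/t) * (1 - Dfun c t) with hNsdef
  have hPs : Ps = ENNReal.ofReal (Real.log m) + ENNReal.ofReal (c/m) := Pstar_eval hc
  have hNs : Ns = ENNReal.ofReal (Real.log m - Real.log c + c/m - 1) := Nstar_eval hc
  have hPsfin : Ps ≠ ⊤ := by rw [hPs]; exact ENNReal.add_ne_top.2 ⟨ENNReal.ofReal_ne_top, ENNReal.ofReal_ne_top⟩
  have hNsfin : Ns ≠ ⊤ := by rw [hNs]; exact ENNReal.ofReal_ne_top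
  have hNsnonneg : 0 ≤ Real.log m - Real.log c + c/m - 1 := by
    rcases le_or_gt 1 c with h | h
    · have : m = c := max_eq_right h
      rw [this, div_self (ne_of_gt hc)]; ring_nf; exact le_refl 0
    · have : m = 1 := max_eq_left h.le
      rw [this, Real.log_one, div_one]
      have := Real.log_le_sub_one_of_pos hc
      linarith
  have hPsToReal : Ps.toReal = Real.log m + c/m := by
    rw [hPs, ENNReal.toReal_add ENNReal.ofReal_ne_top ENNReal.ofReal_ne_top,
      ENNReal.toReal_ofReal (Real.log_nonneg hm1), ENNReal.toReal_ofReal (by positivity)]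
  have hNsToReal : Ns.toReal = Real.log m - Real.log c + c/m - 1 := by
    rw [hNs, ENNReal.toReal_ofReal hNsnonneg]
  -- inequalities
  have hPle : P ≤ Ps := by
    rw [hPdef, hPsdef]
    apply lintegral_mono_ae
    filter_upwards [ae_restrict_mem measurableSet_Ici] with t ht
    have ht0 : (0:ℝ) < t := lt_of_lt_of_le one_pos ht
    exact mul_le_mul_right (htailD t ht0) _
  have hNge : Ns ≤ N := by
    rw [hNdef, hNsdef]
    apply lintegral_mono_ae
    filter_upwards [ae_restrict_mem measurableSet_Ioo] with t ht
    apply mul_le_mul_right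
    rw [hcompl t]
    exact tsub_le_tsub_left (htailD t ht.1) 1
  -- equality of toReals
  have hPr : P.toReal = Ps.toReal ∧ N.toReal = Ns.toReal := by
    have h1 : P.toReal ≤ Ps.toReal := ENNReal.toReal_mono hPsfin hPle
    have h2 : Ns.toReal ≤ N.toReal := ENNReal.toReal_mono hNfin hNge
    have h3 : Ps.toReal - Ns.toReal = 1 + Real.log c := by
      rw [hPsToReal, hNsToReal]; ring
    constructor <;> linarith [hmain, h3]
  have hPeq : P = Ps := (ENNReal.toReal_eq_toReal_iff' hPfin hPsfin).1 hPr.1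
  have hNeq : N = Ns := (ENNReal.toReal_eq_toReal_iff' hNfin hNsfin).1 hPr.2
  -- a.e. equality of integrands
  have hνIoi_meas : Measurable (fun t : ℝ => ν (Set.Ioi t)) := by
    apply Antitone.measurable
    intro a b hab
    exact measure_mono (Set.Ioi_subset_Ioi hab)
  have hνIic_meas : Measurable (fun t : ℝ => ν (Set.Iic t)) := by
    apply Monotone.measurable
    intro a b hab
    exact measure_mono (Set.Iic_subset_Iic.2 hab)
  have hDmeas : Measurable (Dfun c) := by
    apply Measurable.min measurable_const
    fun_prop
  have haeP : (fun t => ENNReal.ofReal (1/t) * ν (Set.Ioi t))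
      =ᵐ[volume.restrict (Set.Ici 1)] (fun t => ENNReal.ofReal (1/t) * Dfun c t) := by
    apply ae_eq_of_lint_eq ((by fun_prop : Measurable fun t : ℝ => ENNReal.ofReal (1/t)).mul
      hνIoi_meas) ((by fun_prop : Measurable fun t : ℝ => ENNReal.ofReal (1/t)).mul hDmeas)
      hPfin ?_ hPeq
    filter_upwards [ae_restrict_mem measurableSet_Ici] with t ht
    exact mul_le_mul_right (htailD t (lt_of_lt_of_le one_pos ht)) _
  have haeN : (fun t => ENNReal.ofReal (1/t) * (1 - Dfun c t))
      =ᵐ[volume.restrict (Set.Ioo 0 1)] (fun t => ENNReal.ofReal (1/t) * ν (Set.Iic t)) := by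
    apply ae_eq_of_lint_eq ((by fun_prop : Measurable fun t : ℝ => ENNReal.ofReal (1/t)).mul
      ((measurable_const (a := (1:ℝ≥0∞))).sub hDmeas))
      ((by fun_prop : Measurable fun t : ℝ => ENNReal.ofReal (1/t)).mul hνIic_meas)
      hNsfin ?_ (hNeq.symm)
    filter_upwards [ae_restrict_mem measurableSet_Ioo] with t ht
    show ENNReal.ofReal (1/t) * (1 - Dfun c t) ≤ ENNReal.ofReal (1/t) * ν (Set.Iic t)
    apply mul_le_mul_right
    rw [hcompl t]
    exact tsub_le_tsub_left (htailD t ht.1) 1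
  -- convert to F
  set G : ℝ → ℝ := fun t => 1 - min 1 (c/t) with hGdef
  have hFae : ∀ᵐ t ∂(volume : Measure ℝ), t ∈ Set.Ioi (0:ℝ) → F t = G t := by
    have h1 : ∀ᵐ t ∂(volume : Measure ℝ), t ∈ Set.Ici (1:ℝ) → F t = G t := by
      rw [← ae_restrict_iff' measurableSet_Ici]
      filter_upwards [haeP, ae_restrict_mem measurableSet_Ici] with t ht htm
      have ht0 : (0:ℝ) < t := lt_of_lt_of_le one_pos htm
      have hcancel : ν (Set.Ioi t) = Dfun c t := by
        have h0 : ENNReal.ofReal (1/t) ≠ 0 := by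
          simp only [ne_eq, ENNReal.ofReal_eq_zero, not_le]; positivity
        exact (ENNReal.mul_right_inj h0 ENNReal.ofReal_ne_top).1 ht
      rw [hF t, ← hν_Iic t, hcompl t, hcancel, hGdef]
      rw [ENNReal.toReal_sub_of_le Dfun_le_one ENNReal.one_ne_top, ENNReal.toReal_one,
        Dfun_toReal hc.le ht0]
    have h2 : ∀ᵐ t ∂(volume : Measure ℝ), t ∈ Set.Ioo (0:ℝ) 1 → F t = G t := by
      rw [← ae_restrict_iff' measurableSet_Ioo]
      filter_upwards [haeN, ae_restrict_mem measurableSet_Ioo] with t ht htm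
      have ht0 : (0:ℝ) < t := htm.1
      have hcancel : 1 - Dfun c t = ν (Set.Iic t) := by
        have h0 : ENNReal.ofReal (1/t) ≠ 0 := by
          simp only [ne_eq, ENNReal.ofReal_eq_zero, not_le]; positivity
        exact (ENNReal.mul_right_inj h0 ENNReal.ofReal_ne_top).1 ht
      rw [hF t, ← hν_Iic t, ← hcancel, hGdef]
      rw [ENNReal.toReal_sub_of_le Dfun_le_one ENNReal.one_ne_top, ENNReal.toReal_one,
        Dfun_toReal hc.le ht0]
    filter_upwards [h1, h2] with t ht1 ht2 ht
    rcases lt_or_ge t 1 with h | h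
    · exact ht2 ⟨ht, h⟩
    · exact ht1 h
  -- continuity upgrade
  have hGcont : ContinuousOn G (Set.Ioi 0) := by
    have hdiv : ContinuousOn (fun t : ℝ => c/t) (Set.Ioi 0) :=
      ContinuousOn.div continuousOn_const continuousOn_id (fun x hx => ne_of_gt hx)
    have hmin : ContinuousOn (fun t : ℝ => min 1 (c/t)) (Set.Ioi 0) := by
      have : (fun t : ℝ => min 1 (c/t))
          = (fun p : ℝ × ℝ => min p.1 p.2) ∘ (fun t : ℝ => ((1:ℝ), c/t)) := rfl
      rw [this]
      exact Continuous.comp_continuousOn continuous_min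
        (ContinuousOn.prodMk continuousOn_const hdiv)
    exact continuousOn_const.sub hmin
  have hFeqG : ∀ t : ℝ, 0 < t → F t = G t := by
    intro t ht
    by_contra hne
    set B : Set ℝ := Set.Ioi 0 ∩ (fun t => F t - G t) ⁻¹' ({0}ᶜ) with hBdef
    have hBopen : IsOpen B := by
      have hsub : ContinuousOn (fun t => F t - G t) (Set.Ioi 0) :=
        ContinuousOn.sub (Continuous.continuousOn hcont) hGcont
      exact ContinuousOn.isOpen_inter_preimage hsub isOpen_Ioi isOpen_compl_singleton
    have hBnull : volume B = 0 := by
      rw [← le_zero_iff]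
      calc volume B ≤ volume {t : ℝ | ¬ (t ∈ Set.Ioi (0:ℝ) → F t = G t)} := by
            apply measure_mono
            intro x hx
            simp only [Set.mem_setOf_eq, Classical.not_imp]
            refine ⟨hx.1, fun h => hx.2 (by simp [h, sub_eq_zero] )⟩
        _ = 0 := by rw [← ae_iff] at *; exact (by simpa [ae_iff] using hFae)
    have : B = ∅ := hBopen.eq_empty_of_measure_zero hBnull
    apply hne
    have htB : t ∉ B := by rw [this]; exact Set.notMem_empty t
    rw [hBdef] at htB
    simp only [Set.mem_inter_iff, Set.mem_preimage, Set.mem_compl_iff, Set.mem_singleton_iff,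
      not_and, Set.mem_Ioi, not_not] at htB
    have := htB ht
    linarith [this]
  -- conclusion
  intro p
  rcases le_or_gt p 0 with hp | hp
  · have hcond : p ≤ c := le_trans hp hc.le
    rw [if_pos hcond, hF p]
    have : μ {ω | V ω ≤ p} = 0 := by
      have hμ : μ {ω | ¬ 0 < V ω} = 0 := by simpa [ae_iff] using hpos
      apply measure_mono_null _ hμ
      intro ω hω
      simp only [Set.mem_setOf_eq, not_lt] at *
      linarith
    rw [this]; simp
  · rw [hFeqG p hp, hGdef]
    rcases le_or_gt p c with hpc | hpc
    · rw [if_pos hpc]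
      simp only
      rw [min_eq_left (by rw [le_div_iff₀ hp]; linarith), sub_self]
    · rw [if_neg (not_le.2 hpc)]
      simp only
      rw [min_eq_right (by rw [div_le_one hp]; exact hpc.le)]
end

section
/- For any positive random variable V with finite expectation, the optimal seller revenue u(V) = sup_{p>0} p·P(V > p) is at most E[V], with equality if and only if V is almost surely constant. -/
open MeasureTheory

/-- For a positive random variable `V` with finite expectation, the optimal seller
revenue `u(V) = sup_{p>0} p·P(V > p)` is at most `E[V]`, with equality iff `V` is
almost surely constant. -/
theorem stmt_10 {Ω : Type*} [MeasurableSpace Ω] (μ : Measure Ω) [IsProbabilityMeasure μ]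
    (V : Ω → ℝ) (hV : Measurable V) (hpos : ∀ᵐ ω ∂μ, 0 < V ω)
    (hVint : Integrable V μ) :
    (⨆ p : {p : ℝ // 0 < p}, (p : ℝ) * (μ {ω | (p : ℝ) < V ω}).toReal) ≤ ∫ ω, V ω ∂μ ∧
      ((⨆ p : {p : ℝ // 0 < p}, (p : ℝ) * (μ {ω | (p : ℝ) < V ω}).toReal) = ∫ ω, V ω ∂μ ↔
        ∃ a : ℝ, V =ᵐ[μ] fun _ => a) := by
  have hV0 : 0 ≤ᵐ[μ] V := hpos.mono fun ω h => h.le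
  have hnull : μ {ω | ¬ 0 < V ω} = 0 := by
    rw [← ae_iff]; exact hpos
  -- the basic per-price bound : p·μ{V>p} = ∫_{V>p} p ≤ ∫_{V>p} V
  have aux : ∀ p : ℝ, 0 ≤ p →
      p * (μ {ω | p < V ω}).toReal ≤ ∫ ω in {ω | p < V ω}, V ω ∂μ := by
    intro p hp
    have hs : MeasurableSet {ω | p < V ω} := measurableSet_lt measurable_const hV
    have h1 : p * (μ {ω | p < V ω}).toReal = ∫ _ in {ω | p < V ω}, p ∂μ := by
      rw [setIntegral_const, smul_eq_mul, mul_comm]; rfl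
    rw [h1]
    exact setIntegral_mono_on
      ((integrableOn_const_iff (C := p)).mpr (Or.inr (measure_lt_top μ _)))
      hVint.integrableOn hs (fun ω hω => le_of_lt hω)
  have key : ∀ p : ℝ, 0 ≤ p → p * (μ {ω | p < V ω}).toReal ≤ ∫ ω, V ω ∂μ :=
    fun p hp => (aux p hp).trans (setIntegral_le_integral hVint hV0)
  have hbdd : BddAbove (Set.range fun p : {p : ℝ // 0 < p} =>
      (p : ℝ) * (μ {ω | (p : ℝ) < V ω}).toReal) := by
    refine ⟨∫ ω, V ω ∂μ, ?_⟩
    rintro _ ⟨p, rfl⟩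
    exact key p p.2.le
  have hle : (⨆ p : {p : ℝ // 0 < p}, (p : ℝ) * (μ {ω | (p : ℝ) < V ω}).toReal)
      ≤ ∫ ω, V ω ∂μ :=
    ciSup_le fun p => key p p.2.le
  refine ⟨hle, ?_, ?_⟩
  · -- equality → a.s. constant
    intro heq
    by_contra hnc
    -- Step 1: find c with μ{V ≤ c} ≠ 0 and μ{c < V} ≠ 0
    have hC : ∃ c : ℝ, μ {ω | V ω ≤ c} ≠ 0 ∧ μ {ω | c < V ω} ≠ 0 := by
      by_contra hD'
      push_neg at hD'
      have hD : ∀ c : ℝ, μ {ω | V ω ≤ c} = 0 ∨ μ {ω | c < V ω} = 0 := by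
        intro c
        by_cases h : μ {ω | V ω ≤ c} = 0
        · exact Or.inl h
        · exact Or.inr (hD' c h)
      have hI0 : 0 ≤ ∫ ω, V ω ∂μ := integral_nonneg_of_ae hV0
      set c₀ : ℝ := ∫ ω, V ω ∂μ + 1 with hc₀
      -- μ{V ≤ c₀} ≠ 0, hence c₀ ∈ S
      have hS0 : μ {ω | c₀ < V ω} = 0 := by
        rcases hD c₀ with h | h
        · exfalso
          have hae : ∀ᵐ ω ∂μ, c₀ < V ω := by
            rw [ae_iff]
            convert h using 2
            ext ω; simp [not_lt]
          have : c₀ ≤ ∫ ω, V ω ∂μ := by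
            have := integral_mono_ae (integrable_const c₀) hVint (hae.mono fun ω h => h.le)
            simpa using this
          linarith
        · exact h
      set S : Set ℝ := {c : ℝ | μ {ω | c < V ω} = 0} with hSdef
      have hSne : S.Nonempty := ⟨c₀, hS0⟩
      have hSbdd : BddBelow S := by
        refine ⟨0, fun c hc => ?_⟩
        by_contra hc0
        push_neg at hc0
        have hcompl0 : μ {ω | c < V ω}ᶜ = 0 :=
          measure_mono_null
            (fun ω hω => not_lt.mpr
              (le_trans (not_lt.mp (show ¬ c < V ω from hω)) hc0.le)) hnull
        have hadd := measure_add_measure_compl (μ := μ)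
          (measurableSet_lt measurable_const hV : MeasurableSet {ω | c < V ω})
        rw [hcompl0, add_zero, measure_univ, hc] at hadd
        exact zero_ne_one hadd
      set m : ℝ := sInf S with hm
      have hup : μ {ω | m < V ω} = 0 := by
        have hsub : {ω | m < V ω} ⊆ ⋃ n : ℕ, {ω | m + 1 / (n + 1) < V ω} := by
          intro ω hω
          obtain ⟨n, hn⟩ := exists_nat_one_div_lt
            (show (0:ℝ) < V ω - m from sub_pos.mpr hω)
          exact Set.mem_iUnion.mpr ⟨n, by simp only [Set.mem_setOf_eq]; linarith⟩
        refine measure_mono_null hsub (measure_iUnion_null fun n => ?_)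
        have : m < m + 1 / (n + 1) := by
          have : (0:ℝ) < 1 / ((n:ℝ) + 1) := by positivity
          linarith
        obtain ⟨c, hcS, hclt⟩ := (csInf_lt_iff hSbdd hSne).mp this
        exact measure_mono_null (fun ω hω => lt_trans hclt hω) hcS
      have hdn : μ {ω | V ω < m} = 0 := by
        have hsub : {ω | V ω < m} ⊆ ⋃ n : ℕ, {ω | V ω ≤ m - 1 / (n + 1)} := by
          intro ω hω
          obtain ⟨n, hn⟩ := exists_nat_one_div_lt
            (show (0:ℝ) < m - V ω from sub_pos.mpr hω)
          exact Set.mem_iUnion.mpr ⟨n, by simp only [Set.mem_setOf_eq]; linarith⟩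
        refine measure_mono_null hsub (measure_iUnion_null fun n => ?_)
        have hclt : m - 1 / (↑n + 1) < m := by
          have : (0:ℝ) < 1 / (↑n + 1) := by positivity
          linarith
        have hcnot : (m - 1 / (↑n + 1)) ∉ S := fun h => absurd (csInf_le hSbdd h) (not_le.mpr hclt)
        rcases hD (m - 1 / (↑n + 1)) with h | h
        · exact h
        · exact absurd h hcnot
      have : V =ᵐ[μ] fun _ => m := by
        rw [Filter.EventuallyEq, ae_iff]
        refine measure_mono_null (fun ω hω => ?_) (measure_union_null hdn hup)
        rcases lt_or_gt_of_ne (hω : V ω ≠ m) with h | h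
        · exact Or.inl h
        · exact Or.inr h
      exact hnc ⟨m, this⟩
    obtain ⟨c, hc1, hc2⟩ := hC
    have hcpos : 0 < c := by
      by_contra hc0
      push_neg at hc0
      exact hc1 (measure_mono_null (fun ω hω => not_lt.mpr (le_trans hω hc0)) hnull)
    -- δ₁ = ∫_{V ≤ c} V > 0
    have hmc : MeasurableSet {ω | V ω ≤ c} := measurableSet_le hV measurable_const
    have hδ1 : 0 < ∫ ω in {ω | V ω ≤ c}, V ω ∂μ := by
      rw [setIntegral_pos_iff_support_of_nonneg_ae (ae_restrict_of_ae hV0) hVint.integrableOn]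
      have hd : μ ({ω | V ω ≤ c} \ Function.support V) = 0 := by
        refine measure_mono_null (fun ω hω => ?_) hnull
        have := hω.2
        simp only [Function.mem_support, not_not] at this
        simp [this]
      have hle' : μ {ω | V ω ≤ c} ≤ μ ({ω | V ω ≤ c} ∩ Function.support V) := by
        calc μ {ω | V ω ≤ c} ≤ μ ({ω | V ω ≤ c} ∩ Function.support V)
              + μ ({ω | V ω ≤ c} \ Function.support V) := measure_le_inter_add_diff μ _ _
          _ = μ ({ω | V ω ≤ c} ∩ Function.support V) := by rw [hd, add_zero]
        
      rw [Set.inter_comm]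
      exact lt_of_lt_of_le (pos_iff_ne_zero.mpr hc1) hle'
    -- δ₂ = ∫ max (V - c) 0 > 0
    have hgint : Integrable (fun ω => max (V ω - c) 0) μ :=
      (hVint.sub (integrable_const c)).pos_part
    have hg0 : 0 ≤ᵐ[μ] fun ω => max (V ω - c) 0 :=
      Filter.Eventually.of_forall fun ω => le_max_right _ _
    have hδ2 : 0 < ∫ ω, max (V ω - c) 0 ∂μ := by
      rw [integral_pos_iff_support_of_nonneg_ae hg0 hgint]
      refine lt_of_lt_of_le (pos_iff_ne_zero.mpr hc2) (measure_mono fun ω hω => ?_)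
      have : 0 < V ω - c := sub_pos.mpr hω
      simp [Function.mem_support, max_eq_left this.le]
      linarith
    set δ : ℝ := min (∫ ω in {ω | V ω ≤ c}, V ω ∂μ) (∫ ω, max (V ω - c) 0 ∂μ) with hδ
    have hδpos : 0 < δ := lt_min hδ1 hδ2
    -- the refined bound
    have bound : ∀ p : ℝ, 0 < p → p * (μ {ω | p < V ω}).toReal ≤ ∫ ω, V ω ∂μ - δ := by
      intro p hp
      have hs : MeasurableSet {ω | p < V ω} := measurableSet_lt measurable_const hV
      rcases le_total p c with hpc | hcp
      · -- p ≤ c : gap at least δ₂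
        have h1 : p * (μ {ω | p < V ω}).toReal = ∫ _ in {ω | p < V ω}, p ∂μ := by
          rw [setIntegral_const, smul_eq_mul, mul_comm]; rfl
        have h2 : ∫ _ in {ω | p < V ω}, p ∂μ
            ≤ ∫ ω in {ω | p < V ω}, (V ω - max (V ω - c) 0) ∂μ := by
          refine setIntegral_mono_on ((integrableOn_const_iff (C := p)).mpr (Or.inr (measure_lt_top μ _)))
            (hVint.sub hgint).integrableOn hs (fun ω hω => ?_)
          rcases le_total (V ω) c with h | h
          · have : max (V ω - c) 0 = 0 := max_eq_right (by linarith)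
            rw [this]; simpa using le_of_lt hω
          · have : max (V ω - c) 0 = V ω - c := max_eq_left (by linarith)
            rw [this]; linarith
        have h3 : ∫ ω in {ω | p < V ω}, (V ω - max (V ω - c) 0) ∂μ
            ≤ ∫ ω, (V ω - max (V ω - c) 0) ∂μ := by
          refine setIntegral_le_integral (hVint.sub hgint) (hpos.mono fun ω h => ?_)
          simp only [Pi.zero_apply]
          rcases le_total (V ω) c with h' | h'
          · have hmx : max (V ω - c) 0 = 0 := max_eq_right (by linarith)
            rw [hmx]; linarith
          · have hmx : max (V ω - c) 0 = V ω - c := max_eq_left (by linarith)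
            rw [hmx]; linarith [hcpos]
        have h4 : ∫ ω, (V ω - max (V ω - c) 0) ∂μ
            = ∫ ω, V ω ∂μ - ∫ ω, max (V ω - c) 0 ∂μ := integral_sub hVint hgint
        have h5 : δ ≤ ∫ ω, max (V ω - c) 0 ∂μ := min_le_right _ _
        linarith [h1 ▸ (h2.trans h3)]
      · -- c ≤ p : gap at least δ₁
        have h1 : p * (μ {ω | p < V ω}).toReal ≤ ∫ ω in {ω | p < V ω}, V ω ∂μ :=
          aux p hp.le
        have h2 : ∫ ω in {ω | p < V ω}, V ω ∂μ ≤ ∫ ω in {ω | c < V ω}, V ω ∂μ := by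
          refine setIntegral_mono_set hVint.integrableOn (ae_restrict_of_ae hV0) ?_
          exact Filter.Eventually.of_forall fun ω hω => lt_of_le_of_lt hcp hω
        have hcompl : {ω | c < V ω}ᶜ = {ω | V ω ≤ c} := by
          ext ω; simp [not_lt]
        have h3 : ∫ ω in {ω | c < V ω}, V ω ∂μ + ∫ ω in {ω | V ω ≤ c}, V ω ∂μ
            = ∫ ω, V ω ∂μ := by
          rw [← hcompl]
          exact integral_add_compl (measurableSet_lt measurable_const hV) hVint
        have h5 : δ ≤ ∫ ω in {ω | V ω ≤ c}, V ω ∂μ := min_le_left _ _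
        linarith
    have : (⨆ p : {p : ℝ // 0 < p}, (p : ℝ) * (μ {ω | (p : ℝ) < V ω}).toReal)
        ≤ ∫ ω, V ω ∂μ - δ := ciSup_le fun p => bound p p.2
    rw [heq] at this
    linarith
  · -- a.s. constant → equality
    rintro ⟨a, ha⟩
    have hInt : ∫ ω, V ω ∂μ = a := by
      rw [integral_congr_ae ha, integral_const, probReal_univ]
      simp
    have hapos : 0 < a := by
      obtain ⟨ω, hω1, hω2⟩ := (hpos.and ha).exists
      exact lt_of_lt_of_eq hω1 (by simpa using hω2)
    rw [hInt]
    refine le_antisymm (hInt ▸ hle) ?_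
    refine le_of_forall_lt fun b hb => ?_
    set p : ℝ := max (a / 2) ((a + b) / 2) with hpdef
    have hp0 : 0 < p := lt_of_lt_of_le (by linarith) (le_max_left _ _)
    have hpa : p < a := max_lt (by linarith) (by linarith)
    have hbp : b < p := lt_of_lt_of_le (by linarith : b < (a + b) / 2) (le_max_right _ _)
    have hmeas : μ {ω | p < V ω} = 1 := by
      have hae : ∀ᵐ ω ∂μ, p < V ω := ha.mono fun ω h => by rw [h]; exact hpa
      have h0 : μ {ω | p < V ω}ᶜ = 0 := by
        rw [ae_iff] at hae
        convert hae using 2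
        rfl
      have := measure_compl (s := {ω | p < V ω}) (measurableSet_lt measurable_const hV)
        (measure_ne_top μ _)
      rw [h0, measure_univ] at this
      have h1 := tsub_eq_zero_iff_le.mp this.symm
      exact le_antisymm prob_le_one h1
    have hterm : (⟨p, hp0⟩ : {p : ℝ // 0 < p}).1 * (μ {ω | ((⟨p, hp0⟩ : {p : ℝ // 0 < p}) : ℝ) < V ω}).toReal = p := by
      simp [hmeas]
    calc b < p := hbp
      _ = _ := hterm.symm
      _ ≤ _ := le_ciSup hbdd (⟨p, hp0⟩ : {p : ℝ // 0 < p})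
end

section
/- For -1/e ≤ x ≤ 0, the principal branch of the Lambert W function satisfies W(x) ≤ -1 + sqrt(2(e·x + 1)). -/
lemma aux_key : ∀ t : ℝ, 0 ≤ t → t ^ 2 ≤ 2 * ((t - 1) * Real.exp t + 1) := by
  intro t ht
  set f : ℝ → ℝ := fun s => (s - 1) * Real.exp s + 1 - s ^ 2 / 2 with hf
  have hderiv : ∀ s : ℝ, HasDerivAt f (s * (Real.exp s - 1)) s := by
    intro s
    have h1 : HasDerivAt (fun s : ℝ => (s - 1) * Real.exp s)
        (1 * Real.exp s + (s - 1) * Real.exp s) s :=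
      ((hasDerivAt_id s).sub_const 1).mul (Real.hasDerivAt_exp s)
    have h2 : HasDerivAt f (1 * Real.exp s + (s - 1) * Real.exp s - (2 : ℕ) * s ^ (2 - 1) / 2) s :=
      ((h1.add_const 1).sub ((hasDerivAt_pow 2 s).div_const 2))
    convert h2 using 1
    ring
  have hmono : MonotoneOn f (Set.Ici (0 : ℝ)) := by
    apply monotoneOn_of_deriv_nonneg (convex_Ici 0)
    · exact Continuous.continuousOn (by continuity)
    · intro s hs
      exact (hderiv s).differentiableAt.differentiableWithinAt
    · intro s hs
      rw [interior_Ici] at hs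
      rw [(hderiv s).deriv]
      have h1 : (1 : ℝ) ≤ Real.exp s := Real.one_le_exp (le_of_lt hs)
      nlinarith [(Set.mem_Ioi.mp hs).le]
  have h0 : f 0 ≤ f t := hmono (by simp) (by simpa using ht) ht
  simp only [hf, Real.exp_zero] at h0
  nlinarith [h0]

/-- For `-1/e ≤ x ≤ 0`, the principal branch of the Lambert W function (i.e. the
solution `w ≥ -1` of `w·e^w = x`) satisfies `W(x) ≤ -1 + sqrt(2(e·x + 1))`. -/
theorem stmt_13 : ∀ x w : ℝ, -(1 / Real.exp 1) ≤ x → x ≤ 0 →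
    -1 ≤ w → w * Real.exp w = x →
    w ≤ -1 + Real.sqrt (2 * (Real.exp 1 * x + 1)) := by
  intro x w _ _ hw hx
  set t := w + 1 with htdef
  have ht : 0 ≤ t := by linarith
  have hex : Real.exp 1 * x = (t - 1) * Real.exp t := by
    rw [← hx, htdef, Real.exp_add]
    ring
  have hkey : t ^ 2 ≤ 2 * (Real.exp 1 * x + 1) := by
    rw [hex]; exact aux_key t ht
  have : t ≤ Real.sqrt (2 * (Real.exp 1 * x + 1)) := by
    calc t = Real.sqrt (t ^ 2) := by rw [Real.sqrt_sq ht]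
    _ ≤ _ := Real.sqrt_le_sqrt hkey
  linarith
end

section
/- Let 0 < c ≤ 1 and let v ∈ (0,1] satisfy v·e^{1-v} = c. Then v ≥ 1 - sqrt(2(1-c)). -/
lemma aux_14 (t : ℝ) (ht : 0 ≤ t) : (1 - t) * Real.exp t ≤ 1 - t^2/2 := by
  set f : ℝ → ℝ := fun t => 1 - t^2/2 - (1-t)*Real.exp t with hf
  have hmono : MonotoneOn f (Set.Ici 0) := by
    apply monotoneOn_of_deriv_nonneg (convex_Ici 0)
    · fun_prop
    · intro x hx
      apply DifferentiableAt.differentiableWithinAt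
      fun_prop
    · intro x hx
      rw [interior_Ici] at hx
      have hd : HasDerivAt f (x * (Real.exp x - 1)) x := by
        have h1 : HasDerivAt (fun t:ℝ => 1 - t^2/2) (-x) x := by
          simpa using ((hasDerivAt_pow 2 x).div_const 2).const_sub 1
        have h2 : HasDerivAt (fun t:ℝ => (1-t)*Real.exp t)
            (-Real.exp x + (1-x)*Real.exp x) x := by
          exact (((hasDerivAt_id' x).const_sub 1).mul (Real.hasDerivAt_exp x)).congr_deriv (by ring)
        have h3 := h1.sub h2
        exact h3.congr_deriv (by ring)
      rw [hd.deriv]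
      have := Real.one_le_exp (le_of_lt hx)
      nlinarith [(le_of_lt (Set.mem_Ioi.mp hx))]
  have h0 : f 0 = 0 := by simp [hf]
  have := hmono (Set.self_mem_Ici) (Set.mem_Ici.mpr ht) ht
  rw [h0] at this
  simp only [hf] at this
  linarith

/-- If `0 < c ≤ 1` and `v ∈ (0,1]` satisfies `v·e^{1-v} = c`, then
`v ≥ 1 - sqrt(2(1-c))`. -/
theorem stmt_14 : ∀ c v : ℝ, 0 < c → c ≤ 1 → 0 < v → v ≤ 1 →
    v * Real.exp (1 - v) = c → 1 - Real.sqrt (2 * (1 - c)) ≤ v := by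
  intro c v hc hc1 hv hv1 heq
  have ht : (0:ℝ) ≤ 1 - v := by linarith
  have key := aux_14 (1 - v) ht
  have h1 : (1 - (1-v)) * Real.exp (1-v) = c := by
    rw [show 1 - (1-v) = v by ring, heq]
  rw [h1] at key
  -- c ≤ 1 - (1-v)^2/2, so (1-v)^2 ≤ 2*(1-c)
  have h2 : (1-v)^2 ≤ 2*(1-c) := by nlinarith
  have h3 : 1 - v ≤ Real.sqrt (2*(1-c)) := by
    rw [show (1:ℝ) - v = Real.sqrt ((1-v)^2) by rw [Real.sqrt_sq ht]]
    exact Real.sqrt_le_sqrt h2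
  linarith
end

section
/- Let V be a positive random variable with E[V] = 1 and geometric expectation exp(E[log V]) = 1 - δ with 0 < δ < 1. Then the optimal seller revenue u(V) = sup_{p>0} p·P(V>p) satisfies u(V) ≥ 1 - 2^{4/3}·δ^{1/3}. -/
open MeasureTheory

lemma quad_log_bound {x : ℝ} (hx : 0 < x) (hx1 : x ≤ 1) :
    (1 - x)^2/2 ≤ x - 1 - Real.log x := by
  set g : ℝ → ℝ := fun y => y - 1 - Real.log y - (1-y)^2/2 with hg
  have key : ∀ y : ℝ, 0 < y → HasDerivAt g (1 - y⁻¹ - (y-1)) y := by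
    intro y hy
    have h1 : HasDerivAt (fun y : ℝ => y - 1 - Real.log y) (1 - y⁻¹) y :=
      ((hasDerivAt_id y).sub_const 1).sub (Real.hasDerivAt_log hy.ne')
    have h2 : HasDerivAt (fun y : ℝ => (1-y)^2/2) (y - 1) y := by
      have hc : HasDerivAt (fun y : ℝ => 1 - y) (-1) y := (hasDerivAt_id y).const_sub 1
      have := (hc.pow 2).div_const 2
      refine this.congr_deriv ?_
      norm_num
      ring
    exact h1.sub h2
  have anti : AntitoneOn g (Set.Icc x 1) := by
    apply antitoneOn_of_deriv_nonpos (convex_Icc x 1)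
    · apply ContinuousOn.sub
      · apply ContinuousOn.sub
        · exact (continuous_id.sub continuous_const).continuousOn
        · exact Real.continuousOn_log.mono (by
            intro y hy; simp only [Set.mem_compl_iff, Set.mem_singleton_iff]
            exact ne_of_gt (lt_of_lt_of_le hx hy.1))
      · fun_prop
    · intro y hy
      rw [interior_Icc] at hy
      exact (key y (hx.trans hy.1)).differentiableAt.differentiableWithinAt
    · intro y hy
      rw [interior_Icc] at hy
      have hy0 : 0 < y := hx.trans hy.1
      rw [(key y hy0).deriv]
      have : 1 - y⁻¹ - (y-1) = -((y-1)^2/y) := by field_simp; ring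
      rw [this]
      exact neg_nonpos.2 (by positivity)
  have := anti (Set.mem_Icc.2 ⟨le_refl x, hx1⟩) (Set.mem_Icc.2 ⟨hx1, le_refl 1⟩) hx1
  simp only [hg, Real.log_one] at this
  nlinarith [this]

set_option maxHeartbeats 1000000 in
/-- If `V` is positive with `E[V] = 1` and geometric expectation `1 - δ`, `0 < δ < 1`,
then the optimal seller revenue satisfies `u(V) ≥ 1 - 2^{4/3}·δ^{1/3}`. -/
theorem stmt_15 {Ω : Type*} [MeasurableSpace Ω] (μ : Measure Ω) [IsProbabilityMeasure μ]
    (V : Ω → ℝ) (hV : Measurable V) (hpos : ∀ᵐ ω ∂μ, 0 < V ω)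
    (hVint : Integrable V μ) (hEV : ∫ ω, V ω ∂μ = 1)
    (hlogint : Integrable (fun ω => Real.log (V ω)) μ)
    (δ : ℝ) (hδ0 : 0 < δ) (hδ1 : δ < 1)
    (hgeo : Real.exp (∫ ω, Real.log (V ω) ∂μ) = 1 - δ) :
    1 - (2:ℝ) ^ ((4:ℝ)/3) * δ ^ ((1:ℝ)/3) ≤
      ⨆ p : {p : ℝ // 0 < p}, (p : ℝ) * (μ {ω | (p : ℝ) < V ω}).toReal := by
  set B : ℝ := (2:ℝ) ^ ((4:ℝ)/3) with hBdef
  set D : ℝ := δ ^ ((1:ℝ)/3) with hDdef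
  have hB0 : 0 < B := Real.rpow_pos_of_pos two_pos _
  have hD0 : 0 < D := Real.rpow_pos_of_pos hδ0 _
  have hB3 : B ^ (3:ℕ) = 16 := by
    rw [hBdef, ← Real.rpow_natCast ((2:ℝ) ^ ((4:ℝ)/3)) 3,
      ← Real.rpow_mul (by norm_num : (0:ℝ) ≤ 2)]
    rw [show (4:ℝ)/3 * (3:ℕ) = ((4:ℕ):ℝ) by push_cast; ring, Real.rpow_natCast]
    norm_num
  have hD3 : D ^ (3:ℕ) = δ := by
    rw [hDdef, ← Real.rpow_natCast (δ ^ ((1:ℝ)/3)) 3, ← Real.rpow_mul hδ0.le]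
    rw [show (1:ℝ)/3 * (3:ℕ) = (1:ℝ) by push_cast; ring, Real.rpow_one]
  have hnonneg : ∀ p : {p : ℝ // 0 < p}, 0 ≤ (p : ℝ) * (μ {ω | (p : ℝ) < V ω}).toReal := by
    intro p
    have := p.2
    positivity
  by_cases hsmall : δ < 1/16
  swap
  · -- trivial case: RHS ≤ 0
    push_neg at hsmall
    have h1 : 1 ≤ B * D := by
      have h16 : (1:ℝ) ≤ 16 * δ := by linarith
      nlinarith [mul_pos hB0 hD0, sq_nonneg (B*D - 1), sq_nonneg (B*D + 1),
        mul_pos (mul_pos hB0 hD0) (mul_pos hB0 hD0)]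
    have h0 : (0:ℝ) ≤ ⨆ p : {p : ℝ // 0 < p}, (p : ℝ) * (μ {ω | (p : ℝ) < V ω}).toReal :=
      Real.iSup_nonneg hnonneg
    linarith
  -- main case
  have hbdd : BddAbove (Set.range fun p : {p : ℝ // 0 < p} =>
      (p : ℝ) * (μ {ω | (p : ℝ) < V ω}).toReal) := by
    refine ⟨1, ?_⟩
    rintro x ⟨⟨p, hp⟩, rfl⟩
    have hM := mul_meas_ge_le_integral_of_nonneg (hpos.mono fun ω h => h.le) hVint p
    calc p * (μ {ω | p < V ω}).toReal
        ≤ p * (μ {ω | p ≤ V ω}).toReal := by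
          apply mul_le_mul_of_nonneg_left _ hp.le
          exact ENNReal.toReal_mono (measure_ne_top μ _)
            (measure_mono (Set.setOf_subset_setOf.2 fun ω h => le_of_lt h))
      _ ≤ 1 := by rw [← hEV]; exact hM
  have hlog : ∫ ω, Real.log (V ω) ∂μ = Real.log (1 - δ) := by
    have := congrArg Real.log hgeo
    rwa [Real.log_exp] at this
  set L : ℝ := -Real.log (1 - δ) with hLdef
  have hδ' : (0:ℝ) < 1 - δ := by linarith
  have hLle : L ≤ (32/27) * δ := by
    have h1 : Real.log (1 - δ)⁻¹ ≤ (1 - δ)⁻¹ - 1 :=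
      Real.log_le_sub_one_of_pos (inv_pos.2 hδ')
    rw [Real.log_inv] at h1
    have h2 : (1 - δ)⁻¹ - 1 = δ / (1 - δ) := by field_simp; ring
    have h3 : δ / (1 - δ) ≤ (32/27) * δ := by
      rw [div_le_iff₀ hδ']
      nlinarith
    rw [hLdef]
    linarith [h1.trans_eq h2 |>.trans h3]
  set t : ℝ := 2 * B * D / 3 with htdef
  have hBD1 : B * D < 1 := by
    have h16 : 16 * δ < 1 := by linarith
    nlinarith [mul_pos hB0 hD0, sq_nonneg (B*D - 1), sq_nonneg (B*D + 1),
      mul_pos (mul_pos hB0 hD0) (mul_pos hB0 hD0)]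
  have ht0 : 0 < t := by positivity
  have ht1 : t < 1 := by rw [htdef]; nlinarith
  set p : ℝ := 1 - t with hpdef
  have hp0 : 0 < p := by rw [hpdef]; linarith
  have hp1 : p < 1 := by rw [hpdef]; linarith
  set A : Set Ω := {ω | V ω ≤ p} with hAdef
  have hA : MeasurableSet A := hV measurableSet_Iic
  set q : ℝ := (μ A).toReal with hqdef
  have hq0 : 0 ≤ q := ENNReal.toReal_nonneg
  have hq1 : q ≤ 1 := by
    rw [hqdef]
    exact ENNReal.toReal_le_of_le_ofReal zero_le_one (by simpa using prob_le_one)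
  set f : Ω → ℝ := fun ω => V ω - 1 - Real.log (V ω) with hfdef
  have hfint : Integrable f μ := (hVint.sub (integrable_const 1)).sub hlogint
  have hfnn : 0 ≤ᵐ[μ] f := by
    filter_upwards [hpos] with ω hω
    have := Real.log_le_sub_one_of_pos hω
    simp only [hfdef, Pi.zero_apply]
    linarith
  have hIf : ∫ ω, f ω ∂μ = L := by
    rw [hfdef]
    have : ∫ ω, (V ω - 1 - Real.log (V ω)) ∂μ
        = (∫ ω, (V ω - 1) ∂μ) - ∫ ω, Real.log (V ω) ∂μ :=
      integral_sub (hVint.sub (integrable_const 1)) hlogint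
    rw [this, integral_sub hVint (integrable_const 1), hEV, hlog]
    simp [hLdef]
  have hqL : ((1 - p)^2/2) * q ≤ L := by
    have hstep1 : ((1 - p)^2/2) * q = ∫ _ω in A, ((1 - p)^2/2) ∂μ := by
      rw [setIntegral_const, smul_eq_mul, mul_comm]; rfl
    have hstep2 : ∫ _ω in A, ((1 - p)^2/2) ∂μ ≤ ∫ ω in A, f ω ∂μ := by
      apply integral_mono_ae (integrable_const _) (hfint.integrableOn)
      have h1 : ∀ᵐ ω ∂(μ.restrict A), 0 < V ω := ae_restrict_of_ae hpos
      have h2 : ∀ᵐ ω ∂(μ.restrict A), ω ∈ A := ae_restrict_mem hA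
      filter_upwards [h1, h2] with ω hω hmem
      have hVp : V ω ≤ p := hmem
      have hkey := quad_log_bound hω (hVp.trans hp1.le)
      simp only [hfdef]
      nlinarith [hω.le]
    have hstep3 : ∫ ω in A, f ω ∂μ ≤ ∫ ω, f ω ∂μ := setIntegral_le_integral hfint hfnn
    rw [← hIf]
    linarith [hstep1, hstep2, hstep3]
  have hcompl : (μ {ω | p < V ω}).toReal = 1 - q := by
    have hset : {ω | p < V ω} = Aᶜ := by
      ext ω; simp [hAdef, not_le]
    rw [hset, prob_compl_eq_one_sub hA,
      ENNReal.toReal_sub_of_le prob_le_one ENNReal.one_ne_top, ENNReal.toReal_one, hqdef]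
  have hterm : 1 - B * D ≤ p * (μ {ω | p < V ω}).toReal := by
    rw [hcompl]
    -- q ≤ B*D/3
    have hqbd : q ≤ B * D / 3 := by
      have h1 : (1 - p)^2 /2 = 2 * B^2 * D^2 / 9 := by rw [hpdef, htdef]; ring
      rw [h1] at hqL
      have h2 := mul_le_mul_of_nonneg_left (hqL.trans hLle) hB0.le
      -- B * (2 B² D² / 9 * q) ≤ B * (32/27 * δ)
      have hδD : δ = D^3 := hD3.symm
      rw [hδD] at h2
      have hB3' : B^3 = 16 := hB3
      nlinarith [mul_pos hD0 hD0, sq_nonneg D, mul_nonneg (mul_nonneg hD0.le hD0.le) hq0]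
    rw [hpdef, htdef]
    nlinarith [mul_nonneg ht0.le hq0]
  calc 1 - B * D ≤ p * (μ {ω | p < V ω}).toReal := hterm
    _ ≤ _ := le_ciSup hbdd ⟨p, hp0⟩
end

section
/- Let V be a positive random variable with finite expectation and exp(E[log V]) = (1-δ)·E[V] for δ ∈ (0,1). Then u(V) ≥ (1 - 2^{4/3}·δ^{1/3})·E[V]. -/
open MeasureTheory

lemma key_num {δ ε : ℝ} (hδ0 : 0 < δ) (hδ : δ < 1/16) (hε0 : 0 < ε)
    (hε3 : ε ^ 3 = 2 * δ) :
    (-Real.log (1 - δ)) * (1 - ε) ≤ ε * (-ε - Real.log (1 - ε)) := by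
  have hεh : ε < 1/2 := by
    by_contra h
    push_neg at h
    have := pow_le_pow_left₀ (by norm_num : (0:ℝ) ≤ 1/2) h 3
    norm_num at this
    linarith
  have hD := Real.abs_log_sub_add_sum_range_le (x := δ) (by rw [abs_of_pos hδ0]; linarith) 2
  have hF := Real.abs_log_sub_add_sum_range_le (x := ε) (by rw [abs_of_pos hε0]; linarith) 4
  simp only [Finset.sum_range_succ, Finset.sum_range_zero, abs_of_pos hδ0, abs_of_pos hε0] at hD hF
  rw [abs_le] at hD hF
  obtain ⟨hD1, -⟩ := hD
  obtain ⟨-, hF2⟩ := hF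
  norm_num at hD1 hF2
  have hd : δ ^ 3 / (1 - δ) ≤ (16/15) * δ ^ 3 := by
    rw [div_le_iff₀ (by linarith)]; nlinarith [pow_pos hδ0 3]
  have he : ε ^ 5 / (1 - ε) ≤ 2 * ε ^ 5 := by
    rw [div_le_iff₀ (by linarith)]; nlinarith [pow_pos hε0 5]
  have hA : -Real.log (1 - δ) ≤ δ + δ^2/2 + (16/15) * δ^3 := by linarith
  have hFlb : ε^2/2 + ε^3/3 + ε^4/4 - 2*ε^5 ≤ -ε - Real.log (1 - ε) := by linarith
  have hδε : δ = ε^3/2 := by linarith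
  subst hδε
  have h14 : ε^2 ≤ 1/4 := by nlinarith
  calc (-Real.log (1 - ε^3/2)) * (1 - ε)
      ≤ (ε^3/2 + (ε^3/2)^2/2 + (16/15) * (ε^3/2)^3) * (1 - ε) := by
        nlinarith [Real.log_nonpos (by nlinarith) (by nlinarith : 1 - ε^3/2 ≤ 1)]
    _ ≤ ε * (ε^2/2 + ε^3/3 + ε^4/4 - 2*ε^5) := by
        nlinarith [pow_pos hε0 4, pow_pos hε0 2, sq_nonneg ε, pow_pos hε0 3]
    _ ≤ ε * (-ε - Real.log (1 - ε)) := by nlinarith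

/-- If `V` is positive with finite expectation and geometric expectation
`(1-δ)·E[V]`, `0 < δ < 1`, then `u(V) ≥ (1 - 2^{4/3}·δ^{1/3})·E[V]`. -/
theorem stmt_16 {Ω : Type*} [MeasurableSpace Ω] (μ : Measure Ω) [IsProbabilityMeasure μ]
    (V : Ω → ℝ) (hV : Measurable V) (hpos : ∀ᵐ ω ∂μ, 0 < V ω)
    (hVint : Integrable V μ)
    (hlogint : Integrable (fun ω => Real.log (V ω)) μ)
    (δ : ℝ) (hδ0 : 0 < δ) (hδ1 : δ < 1)
    (hgeo : Real.exp (∫ ω, Real.log (V ω) ∂μ) = (1 - δ) * ∫ ω, V ω ∂μ) :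
    (1 - (2:ℝ) ^ ((4:ℝ)/3) * δ ^ ((1:ℝ)/3)) * (∫ ω, V ω ∂μ) ≤
      ⨆ p : {p : ℝ // 0 < p}, (p : ℝ) * (μ {ω | (p : ℝ) < V ω}).toReal := by
  have hVnn : 0 ≤ᵐ[μ] V := hpos.mono fun ω h => h.le
  set m := ∫ ω, V ω ∂μ with hm
  have hm0 : 0 < m := by
    have h1 : 0 < (1 - δ) * m := hgeo ▸ Real.exp_pos _
    nlinarith
  have hbdd : BddAbove (Set.range fun p : {p : ℝ // 0 < p} =>
      (p : ℝ) * (μ {ω | (p : ℝ) < V ω}).toReal) := by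
    refine ⟨m, ?_⟩
    rintro x ⟨⟨p, hp⟩, rfl⟩
    have h1 : μ {ω | p < V ω} ≤ μ {ω | p ≤ V ω} :=
      measure_mono (Set.setOf_subset_setOf.2 fun ω h => le_of_lt h)
    have h2 : (μ {ω | p < V ω}).toReal ≤ (μ {ω | p ≤ V ω}).toReal :=
      ENNReal.toReal_mono (measure_ne_top μ _) h1
    calc (p : ℝ) * (μ {ω | p < V ω}).toReal
        ≤ p * (μ {ω | p ≤ V ω}).toReal := mul_le_mul_of_nonneg_left h2 hp.le
      _ ≤ m := mul_meas_ge_le_integral_of_nonneg hVnn hVint p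
  rcases le_or_gt (1/16 : ℝ) δ with hbig | hsmall
  · -- trivial case: coefficient nonpositive
    have hc : 1 - (2:ℝ) ^ ((4:ℝ)/3) * δ ^ ((1:ℝ)/3) ≤ 0 := by
      have h2 : (2:ℝ) ^ ((4:ℝ)/3) * δ ^ ((1:ℝ)/3) = (16 * δ) ^ ((1:ℝ)/3) := by
        rw [Real.mul_rpow (by norm_num) hδ0.le]
        congr 1
        rw [show (4:ℝ)/3 = 4 * (1/3) by norm_num, Real.rpow_mul (by norm_num)]
        norm_num
      have h3 : (1:ℝ) ≤ (16 * δ) ^ ((1:ℝ)/3) := by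
        calc (1:ℝ) = (1:ℝ) ^ ((1:ℝ)/3) := (Real.one_rpow _).symm
          _ ≤ (16 * δ) ^ ((1:ℝ)/3) :=
            Real.rpow_le_rpow (by norm_num) (by linarith) (by norm_num)
      rw [h2]; linarith
    have h0 : (1 - (2:ℝ) ^ ((4:ℝ)/3) * δ ^ ((1:ℝ)/3)) * m ≤ 0 :=
      mul_nonpos_of_nonpos_of_nonneg hc hm0.le
    refine h0.trans (le_ciSup_of_le hbdd ⟨1, one_pos⟩ ?_)
    positivity
  · -- main case
    set ε := (2 * δ) ^ ((1:ℝ)/3) with hεdef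
    have hε0 : 0 < ε := Real.rpow_pos_of_pos (by linarith) _
    have hε3 : ε ^ 3 = 2 * δ := by
      rw [hεdef, ← Real.rpow_natCast ((2*δ) ^ ((1:ℝ)/3)) 3, ← Real.rpow_mul (by linarith)]
      norm_num
    have hεh : ε < 1/2 := by
      by_contra h
      push_neg at h
      have := pow_le_pow_left₀ (by norm_num : (0:ℝ) ≤ 1/2) h 3
      norm_num at this
      nlinarith
    have hcoef : (2:ℝ) ^ ((4:ℝ)/3) * δ ^ ((1:ℝ)/3) = 2 * ε := by
      rw [hεdef, Real.mul_rpow (by norm_num) hδ0.le,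
        show (4:ℝ)/3 = 1 + 1/3 by norm_num, Real.rpow_add (by norm_num), Real.rpow_one]
      ring
    set p := (1 - ε) * m with hpdef
    have hp : 0 < p := mul_pos (by linarith) hm0
    set S := {ω | V ω ≤ p} with hSdef
    have hS : MeasurableSet S := measurableSet_le hV measurable_const
    set g : Ω → ℝ := fun ω => V ω / m - 1 - Real.log (V ω / m) with hgdef
    have hgrep : g =ᵐ[μ] fun ω => V ω / m - 1 - (Real.log (V ω) - Real.log m) :=
      hpos.mono fun ω h => by
        simp only [hgdef, Real.log_div (ne_of_gt h) (ne_of_gt hm0)]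
    have hint2 : Integrable (fun ω => V ω / m - 1 - (Real.log (V ω) - Real.log m)) μ :=
      ((hVint.div_const m).sub (integrable_const 1)).sub (hlogint.sub (integrable_const _))
    have hgint : Integrable g μ := hint2.congr hgrep.symm
    have hL : ∫ ω, Real.log (V ω) ∂μ = Real.log (1 - δ) + Real.log m := by
      have h := congrArg Real.log hgeo
      rwa [Real.log_exp, Real.log_mul (by linarith) hm0.ne'] at h
    have hgval : ∫ ω, g ω ∂μ = -Real.log (1 - δ) := by
      have hi1 : Integrable (fun ω => V ω / m - 1) μ :=
        (hVint.div_const m).sub (integrable_const 1)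
      have hi2 : Integrable (fun ω => Real.log (V ω) - Real.log m) μ :=
        hlogint.sub (integrable_const _)
      rw [integral_congr_ae hgrep, integral_sub hi1 hi2,
        integral_sub (hVint.div_const m) (integrable_const 1),
        integral_sub hlogint (integrable_const _), integral_div, integral_const, hL]
      simp only [integral_const, measure_univ, ENNReal.toReal_one, one_smul, smul_eq_mul, measureReal_def]
      rw [← hm, div_self hm0.ne']
      ring
    have hgnn : 0 ≤ᵐ[μ] g := hpos.mono fun ω h => by
      have hx : 0 < V ω / m := div_pos h hm0
      have := Real.log_le_sub_one_of_pos hx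
      simp only [hgdef, Pi.zero_apply]
      linarith
    set F := -ε - Real.log (1 - ε) with hFdef
    have hF0 : 0 < F := by
      have := Real.log_lt_sub_one_of_pos (show 0 < 1 - ε by linarith)
        (by intro h; linarith [hε0])
      simp only [hFdef]
      linarith
    have hSg : ∀ᵐ ω ∂μ, ω ∈ S → F ≤ g ω := hpos.mono fun ω h hωS => by
      have hx : 0 < V ω / m := div_pos h hm0
      have h1ε : (0:ℝ) < 1 - ε := by linarith
      have hxle : V ω / m ≤ 1 - ε := by
        rw [div_le_iff₀ hm0]
        exact hωS
      have hlog : Real.log ((V ω / m) / (1 - ε)) ≤ (V ω / m) / (1 - ε) - 1 :=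
        Real.log_le_sub_one_of_pos (div_pos hx h1ε)
      rw [Real.log_div hx.ne' h1ε.ne'] at hlog
      have h4 : (V ω / m) / (1 - ε) ≤ V ω / m + ε := by
        rw [div_le_iff₀ h1ε]
        nlinarith
      simp only [hgdef, hFdef]
      linarith
    have hmark : F * (μ S).toReal ≤ -Real.log (1 - δ) := by
      have h1 : ∫ _ in S, F ∂μ ≤ ∫ ω in S, g ω ∂μ :=
        setIntegral_mono_on_ae (integrableOn_const (measure_ne_top μ S))
          hgint.integrableOn hS hSg
      rw [setIntegral_const, smul_eq_mul, measureReal_def] at h1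
      have h2 : ∫ ω in S, g ω ∂μ ≤ ∫ ω, g ω ∂μ := setIntegral_le_integral hgint hgnn
      rw [hgval] at h2
      linarith [h1, h2, mul_comm F (μ S).toReal]
    have hcompl : (μ {ω | p < V ω}).toReal = 1 - (μ S).toReal := by
      have hset : {ω | p < V ω} = Sᶜ := by
        ext ω; simp [hSdef, not_le]
      rw [hset, measure_compl hS (measure_ne_top μ S), measure_univ,
        ENNReal.toReal_sub_of_le prob_le_one ENNReal.one_ne_top, ENNReal.toReal_one]
    have hkey : (-Real.log (1 - δ)) * (1 - ε) ≤ ε * F := key_num hδ0 hsmall hε0 hε3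
    refine le_ciSup_of_le hbdd ⟨p, hp⟩ ?_
    show (1 - (2:ℝ) ^ ((4:ℝ)/3) * δ ^ ((1:ℝ)/3)) * m ≤ p * (μ {ω | p < V ω}).toReal
    rw [hcoef, hcompl]
    set s := (μ S).toReal with hsdef
    have hs0 : 0 ≤ s := ENNReal.toReal_nonneg
    have h6 : F * (s * (1 - ε)) ≤ F * ε := by nlinarith [hmark, hkey, hε0]
    have h5 : s * (1 - ε) ≤ ε := le_of_mul_le_mul_left h6 hF0
    have h7 : 1 - 2*ε ≤ (1 - ε) * (1 - s) := by nlinarith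
    calc (1 - 2*ε) * m ≤ ((1 - ε) * (1 - s)) * m := mul_le_mul_of_nonneg_right h7 hm0.le
      _ = (1 - ε) * m * (1 - s) := by ring
end
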